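/- arXiv:2212.12265 — 4 statements merged into one kernel-verified Lean document; each statement's English description precedes it below -/
import Mathlib

section
/- Let C1 and C2 be convolutional codes in F[x]^n of rank k and let φ : C1 → C2 be an equivalence. Then d^r(C1) = d^r(C2) for every 1 ≤ r ≤ k. -/
open Polynomial

namespace ConvCode

variable {F : Type*} [Field F] [Fintype F] {n k : ℕ}

/-- Weight of a polynomial vector: total number of nonzero coefficients. -/
noncomputable def wtv (c : Fin n → Polynomial F) : ℕ := ∑ ℓ, (c ℓ).support.card

/-- Truncation of a polynomial, keeping the coefficients of degrees `h` through `j`. -/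
noncomputable def truncp (h j : ℕ) (p : Polynomial F) : Polynomial F :=
  ∑ i ∈ Finset.Icc h j, Polynomial.C (p.coeff i) * Polynomial.X ^ i

/-- Truncation `c_{[h,j]}` of a polynomial vector. -/
noncomputable def truncv (h j : ℕ) (c : Fin n → Polynomial F) : Fin n → Polynomial F :=
  fun ℓ => truncp h j (c ℓ)

/-- Degree of a polynomial vector: the largest `i` such that `c[i] ≠ 0`. -/
def degv (c : Fin n → Polynomial F) : ℕ := Finset.univ.sup fun ℓ => (c ℓ).natDegree

/-- `φ` is a `j`-equivalence: it preserves weights of `j`-th truncations. -/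
def IsJEquiv (C1 C2 : Submodule (Polynomial F) (Fin n → Polynomial F))
    (φ : C1 ≃ₗ[Polynomial F] C2) (j : ℕ) : Prop :=
  ∀ c : C1, wtv (truncv 0 j (c : Fin n → Polynomial F)) =
    wtv (truncv 0 j ((φ c : C2) : Fin n → Polynomial F))

/-- `φ` is an equivalence: it is a `j`-equivalence for every `j`. -/
def IsEquiv (C1 C2 : Submodule (Polynomial F) (Fin n → Polynomial F))
    (φ : C1 ≃ₗ[Polynomial F] C2) : Prop := ∀ j : ℕ, IsJEquiv C1 C2 φ j

/-- `φ` is an isometry: it preserves weights. -/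
def IsIsometry (C1 C2 : Submodule (Polynomial F) (Fin n → Polynomial F))
    (φ : C1 ≃ₗ[Polynomial F] C2) : Prop :=
  ∀ c : C1, wtv (c : Fin n → Polynomial F) = wtv ((φ c : C2) : Fin n → Polynomial F)

/-- `G` is a generator matrix of `C`: its rows form an `F[x]`-basis of `C`. -/
def IsGenMat (C : Submodule (Polynomial F) (Fin n → Polynomial F))
    (G : Matrix (Fin k) (Fin n) (Polynomial F)) : Prop :=
  LinearIndependent (Polynomial F) (fun i => G i) ∧
    Submodule.span (Polynomial F) (Set.range fun i => G i) = C

/-- `G` is row reduced: its leading row coefficient matrix has full rank. -/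
def RowReduced (G : Matrix (Fin k) (Fin n) (Polynomial F)) : Prop :=
  LinearIndependent F (fun i => fun ℓ => (G i ℓ).coeff (degv (G i)))

/-- `C` is noncatastrophic: it has a generator matrix with a polynomial right inverse
whose constant term has rank `k`. -/
def Noncatastrophic (C : Submodule (Polynomial F) (Fin n → Polynomial F)) (k : ℕ) : Prop :=
  ∃ G : Matrix (Fin k) (Fin n) (Polynomial F), IsGenMat C G ∧
    (∃ H : Matrix (Fin n) (Fin k) (Polynomial F), G * H = 1) ∧
    LinearIndependent F (fun i => fun ℓ => (G i ℓ).eval 0)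

/-- Joint support of a family of polynomial vectors: the pairs `(ℓ, i)` such that the
coefficient of `x^i` in the `ℓ`-th coordinate of some member is nonzero. -/
def gsupp {r : ℕ} (d : Fin r → Fin n → Polynomial F) : Set (Fin n × ℕ) :=
  { q | ∃ s, ((d s) q.1).coeff q.2 ≠ 0 }

/-- The `(r,j)`-generalized column distance of the code generated by `G`. -/
noncomputable def gcdJ (G : Matrix (Fin k) (Fin n) (Polynomial F)) (r j : ℕ) : ℕ :=
  sInf { m | ∃ p : Fin r → Fin k → Polynomial F,
    LinearIndependent F (fun s => fun l => (p s l).eval 0) ∧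
    m = (gsupp fun s => truncv 0 j (Matrix.vecMul (p s) G)).ncard }

/-- The `r`-generalized column distance: the limit as `j → ∞` of the `(r,j)`-generalized
column distances. -/
noncomputable def gcdLim (G : Matrix (Fin k) (Fin n) (Polynomial F)) (r : ℕ) : ℕ :=
  Filter.limsup (fun j => gcdJ G r j) Filter.atTop

/-- Evaluation at `0`, as an `F`-linear map `F[x]^n → F^n`. -/
noncomputable def ev0 : (Fin n → Polynomial F) →ₗ[F] (Fin n → F) :=
  LinearMap.pi fun ℓ => (Polynomial.aeval (0 : F)).toLinearMap.comp (LinearMap.proj ℓ)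

/-- `C[0] = {c(0) : c ∈ C} ⊆ F^n`. -/
noncomputable def evalZero (C : Submodule (Polynomial F) (Fin n → Polynomial F)) :
    Submodule F (Fin n → F) := (C.restrictScalars F).map ev0

/-- The `r`-th generalized Hamming weight of a block code `L ⊆ F^n`. -/
noncomputable def hammingGW (L : Submodule F (Fin n → F)) (r : ℕ) : ℕ :=
  sInf { m | ∃ V : Submodule F (Fin n → F), V ≤ L ∧ Module.finrank F V = r ∧
    m = { ℓ : Fin n | ∃ v ∈ V, v ℓ ≠ 0 }.ncard }

/-- The `r`-th generalized weight of a convolutional code. -/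
noncomputable def genWt (C : Submodule (Polynomial F) (Fin n → Polynomial F)) (r : ℕ) : ℕ :=
  sInf { m | ∃ d : Fin r → Fin n → Polynomial F, (∀ s, d s ∈ C) ∧
    (r : Cardinal) ≤ Module.rank (Polynomial F)
      ↥(Submodule.span (Polynomial F) (Set.range d)) ∧
    m = (gsupp d).ncard }

/-- The free distance of a convolutional code. -/
noncomputable def dfree (C : Submodule (Polynomial F) (Fin n → Polynomial F)) : ℕ :=
  sInf { m | ∃ c : Fin n → Polynomial F, c ∈ C ∧ c ≠ 0 ∧ m = wtv c }

end ConvCode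

open scoped Classical
open Polynomial
open ConvCode
open scoped Classical

namespace ConvCodeAux
set_option linter.unusedSectionVars false
variable {F : Type*} [Field F] [Fintype F] {n k : ℕ}

/-! ### Basic coefficient / support lemmas -/

lemma coeff_truncp (j : ℕ) (p : Polynomial F) (i : ℕ) :
    (truncp 0 j p).coeff i = if i ≤ j then p.coeff i else 0 := by
  rw [truncp, Polynomial.finset_sum_coeff]
  simp only [Polynomial.coeff_C_mul, Polynomial.coeff_X_pow, mul_ite, mul_one, mul_zero]
  simp only [eq_comm (a := i)]
  rw [Finset.sum_ite_eq' (Finset.Icc 0 j) i (fun m => p.coeff m)]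
  simp

lemma support_truncp (j : ℕ) (p : Polynomial F) :
    (truncp 0 j p).support = (Finset.Icc 0 j).filter fun i => p.coeff i ≠ 0 := by
  ext i
  simp only [Polynomial.mem_support_iff, coeff_truncp, Finset.mem_filter, Finset.mem_Icc]
  by_cases h : i ≤ j <;> simp [h]

lemma wtv_truncv (j : ℕ) (c : Fin n → Polynomial F) :
    wtv (truncv 0 j c) = ∑ ℓ, ∑ i ∈ Finset.Icc 0 j, if (c ℓ).coeff i ≠ 0 then 1 else 0 := by
  unfold wtv truncv
  refine Finset.sum_congr rfl fun ℓ _ => ?_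
  rw [support_truncp, Finset.card_filter]

/-- the truncated joint support, as a Finset -/
noncomputable def gsuppF (j : ℕ) {r : ℕ} (c : Fin r → Fin n → Polynomial F) :
    Finset (Fin n × ℕ) :=
  (Finset.univ ×ˢ Finset.Icc 0 j).filter fun q => ∃ s, ((c s) q.1).coeff q.2 ≠ 0

lemma gsupp_trunc_eq (j : ℕ) {r : ℕ} (c : Fin r → Fin n → Polynomial F) :
    gsupp (fun s => truncv 0 j (c s)) = ↑(gsuppF j c) := by
  ext ⟨ℓ, i⟩
  simp only [gsupp, gsuppF, Set.mem_setOf_eq, Finset.coe_filter, Finset.mem_product,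
    Finset.mem_univ, Finset.mem_Icc, true_and, truncv, coeff_truncp]
  by_cases h : i ≤ j <;> simp [h]

lemma ncard_gsupp_trunc (j : ℕ) {r : ℕ} (c : Fin r → Fin n → Polynomial F) :
    (gsupp (fun s => truncv 0 j (c s))).ncard = (gsuppF j c).card := by
  rw [gsupp_trunc_eq, Set.ncard_coe_finset]

/-! ### Counting -/

lemma count_lin {r : ℕ} (v : Fin r → F) (hv : v ≠ 0) :
    (Finset.univ.filter fun a : Fin r → F => ∑ s, a s * v s ≠ 0).card
      = Fintype.card F ^ r - Fintype.card F ^ (r - 1) := by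
  classical
  obtain ⟨s0, hs0⟩ : ∃ s, v s ≠ 0 := by
    by_contra h; push_neg at h; exact hv (funext h)
  set f : (Fin r → F) →ₗ[F] F := ∑ s, v s • LinearMap.proj s with hf
  have hfa : ∀ a : Fin r → F, f a = ∑ s, a s * v s := by
    intro a
    simp [hf, LinearMap.sum_apply, mul_comm]
  have hsurj : Function.Surjective f := by
    intro b
    refine ⟨fun s => if s = s0 then b * (v s0)⁻¹ else 0, ?_⟩
    rw [hfa, Finset.sum_eq_single s0]
    · simp only [if_pos rfl, if_true]
      field_simp
    · intro s _ hs; simp [hs]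
    · simp
  have hker : Module.finrank F (LinearMap.ker f) = r - 1 := by
    have := LinearMap.finrank_range_add_finrank_ker f
    rw [LinearMap.range_eq_top.2 hsurj] at this
    simp [Module.finrank_self, Module.finrank_fintype_fun_eq_card] at this
    omega
  have hcardker : Fintype.card (LinearMap.ker f) = Fintype.card F ^ (r - 1) := by
    rw [Module.card_eq_pow_finrank (K := F), hker]
  have h0 : (Finset.univ.filter fun a : Fin r → F => ∑ s, a s * v s = 0).card
      = Fintype.card F ^ (r - 1) := by
    rw [← hcardker, Fintype.card_subtype]
    congr 1
    ext a
    simp [LinearMap.mem_ker, hfa]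
  have h1 := Finset.card_filter_add_card_filter_not
    (s := (Finset.univ : Finset (Fin r → F)))
    (p := fun a : Fin r → F => ∑ s, a s * v s = 0)
  have hcard : (Finset.univ : Finset (Fin r → F)).card = Fintype.card F ^ r := by
    simp [Finset.card_univ]
  have h2 : (Finset.univ.filter fun a : Fin r → F => ¬ (∑ s, a s * v s = 0)).card
      = (Finset.univ.filter fun a : Fin r → F => ∑ s, a s * v s ≠ 0).card := by
    simp only [ne_eq]
  rw [h0, h2, hcard] at h1
  exact Nat.eq_sub_of_add_eq' h1

lemma sum_indicator_lin {r : ℕ} (v : Fin r → F) :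
    (∑ a : Fin r → F, if ∑ s, a s * v s ≠ 0 then 1 else 0)
      = (Fintype.card F ^ r - Fintype.card F ^ (r - 1)) * (if ∃ s, v s ≠ 0 then 1 else 0) := by
  by_cases hv : v = 0
  · subst hv
    simp
  · rw [← Finset.card_filter, count_lin v hv]
    have : ∃ s, v s ≠ 0 := by
      by_contra h; push_neg at h; exact hv (funext h)
    simp [this]

lemma sum_wtv_trunc {r : ℕ} (j : ℕ) (c : Fin r → Fin n → Polynomial F) :
    ∑ a : Fin r → F, wtv (truncv 0 j (∑ s, Polynomial.C (a s) • c s))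
      = (Fintype.card F ^ r - Fintype.card F ^ (r - 1)) * (gsuppF j c).card := by
  have key : ∀ (a : Fin r → F) (ℓ : Fin n) (i : ℕ),
      ((∑ s, Polynomial.C (a s) • c s) ℓ).coeff i = ∑ s, a s * ((c s ℓ).coeff i) := by
    intro a ℓ i
    simp [Finset.sum_apply, Polynomial.coeff_C_mul, smul_eq_mul, Polynomial.finset_sum_coeff]
  calc ∑ a : Fin r → F, wtv (truncv 0 j (∑ s, Polynomial.C (a s) • c s))
      = ∑ a : Fin r → F, ∑ ℓ, ∑ i ∈ Finset.Icc 0 j,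
          if (∑ s, a s * ((c s ℓ).coeff i)) ≠ 0 then 1 else 0 := by
        refine Finset.sum_congr rfl fun a _ => ?_
        rw [wtv_truncv]
        exact Finset.sum_congr rfl fun ℓ _ => Finset.sum_congr rfl fun i _ => by rw [key]
    _ = ∑ ℓ, ∑ i ∈ Finset.Icc 0 j, ∑ a : Fin r → F,
          if (∑ s, a s * ((c s ℓ).coeff i)) ≠ 0 then 1 else 0 := by
        rw [Finset.sum_comm]
        exact Finset.sum_congr rfl fun ℓ _ => Finset.sum_comm
    _ = ∑ ℓ, ∑ i ∈ Finset.Icc 0 j,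
          (Fintype.card F ^ r - Fintype.card F ^ (r - 1)) *
            (if ∃ s, ((c s ℓ).coeff i) ≠ 0 then 1 else 0) := by
        exact Finset.sum_congr rfl fun ℓ _ => Finset.sum_congr rfl fun i _ =>
          sum_indicator_lin _
    _ = (Fintype.card F ^ r - Fintype.card F ^ (r - 1)) * (gsuppF j c).card := by
        rw [gsuppF, Finset.card_filter, Finset.sum_product, Finset.mul_sum]
        exact Finset.sum_congr rfl fun ℓ _ => by rw [Finset.mul_sum]

lemma card_eq_of_wt_eq {r : ℕ} (hr : 1 ≤ r) (j : ℕ)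
    (c d : Fin r → Fin n → Polynomial F)
    (h : ∀ a : Fin r → F, wtv (truncv 0 j (∑ s, Polynomial.C (a s) • c s)) =
      wtv (truncv 0 j (∑ s, Polynomial.C (a s) • d s))) :
    (gsuppF j c).card = (gsuppF j d).card := by
  have hsum : ∑ a : Fin r → F, wtv (truncv 0 j (∑ s, Polynomial.C (a s) • c s))
      = ∑ a : Fin r → F, wtv (truncv 0 j (∑ s, Polynomial.C (a s) • d s)) :=
    Finset.sum_congr rfl fun a _ => h a
  rw [sum_wtv_trunc, sum_wtv_trunc] at hsum
  have hq : 2 ≤ Fintype.card F := Fintype.one_lt_card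
  have hlt : Fintype.card F ^ (r - 1) < Fintype.card F ^ r :=
    Nat.pow_lt_pow_right hq (by omega)
  exact Nat.eq_of_mul_eq_mul_left (by omega) hsum

/-! ### vecMul helpers -/

lemma vecMul_eq_sum' (v : Fin k → Polynomial F) (G : Matrix (Fin k) (Fin n) (Polynomial F)) :
    Matrix.vecMul v G = ∑ i, v i • G i := by
  ext j
  simp [Matrix.vecMul, dotProduct, Finset.sum_apply]

lemma vecMul_mem (C : Submodule (Polynomial F) (Fin n → Polynomial F))
    (G : Matrix (Fin k) (Fin n) (Polynomial F)) (hG : IsGenMat C G)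
    (v : Fin k → Polynomial F) : Matrix.vecMul v G ∈ C := by
  rw [← hG.2, vecMul_eq_sum']
  exact Submodule.sum_mem _ fun i _ => Submodule.smul_mem _ _
    (Submodule.subset_span (Set.mem_range_self i))

lemma vecMul_sum_smul {r : ℕ} (a : Fin r → Polynomial F) (u : Fin r → Fin k → Polynomial F)
    (G : Matrix (Fin k) (Fin n) (Polynomial F)) :
    Matrix.vecMul (∑ s, a s • u s) G = ∑ s, a s • Matrix.vecMul (u s) G := by
  funext ℓ
  simp only [Matrix.vecMul, dotProduct, Finset.sum_apply, Pi.smul_apply, smul_eq_mul,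
    Finset.sum_mul, Finset.mul_sum]
  rw [Finset.sum_comm]
  exact Finset.sum_congr rfl fun s _ => Finset.sum_congr rfl fun i _ => by ring

lemma vecMul_smul' (a : Polynomial F) (u : Fin k → Polynomial F)
    (G : Matrix (Fin k) (Fin n) (Polynomial F)) :
    Matrix.vecMul (a • u) G = a • Matrix.vecMul u G := by
  funext ℓ
  simp only [Matrix.vecMul, dotProduct, Pi.smul_apply, smul_eq_mul, Finset.mul_sum]
  exact Finset.sum_congr rfl fun i _ => by ring

lemma vecMul_injective (C : Submodule (Polynomial F) (Fin n → Polynomial F))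
    (G : Matrix (Fin k) (Fin n) (Polynomial F)) (hG : IsGenMat C G)
    (u u' : Fin k → Polynomial F) (h : Matrix.vecMul u G = Matrix.vecMul u' G) : u = u' := by
  have h0 : ∑ i, (u i - u' i) • G i = 0 := by
    simp only [sub_smul, Finset.sum_sub_distrib, ← vecMul_eq_sum', h, sub_self]
  have := Fintype.linearIndependent_iff.1 hG.1 (fun i => u i - u' i) h0
  funext i
  have hi := this i
  exact sub_eq_zero.1 hi

end ConvCodeAux


namespace ConvCodeAux
set_option linter.unusedSectionVars false
set_option maxHeartbeats 1000000
variable {F : Type*} [Field F] [Fintype F] {n k : ℕ}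

lemma isEquiv_symm (C1 C2 : Submodule (Polynomial F) (Fin n → Polynomial F))
    (φ : C1 ≃ₗ[Polynomial F] C2) (hφ : IsEquiv C1 C2 φ) : IsEquiv C2 C1 φ.symm := by
  intro j c
  have := hφ j (φ.symm c)
  rw [φ.apply_symm_apply] at this
  exact this.symm

lemma gcd_set_subset (C1 C2 : Submodule (Polynomial F) (Fin n → Polynomial F))
    (G1 G2 : Matrix (Fin k) (Fin n) (Polynomial F)) (hG1 : IsGenMat C1 G1)
    (hG2 : IsGenMat C2 G2) (φ : C1 ≃ₗ[Polynomial F] C2) (hφ : IsEquiv C1 C2 φ)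
    {r : ℕ} (hr : 1 ≤ r) (j : ℕ) :
    { m | ∃ p : Fin r → Fin k → Polynomial F,
        LinearIndependent F (fun s => fun l => (p s l).eval 0) ∧
        m = (gsupp fun s => truncv 0 j (Matrix.vecMul (p s) G1)).ncard } ⊆
    { m | ∃ p : Fin r → Fin k → Polynomial F,
        LinearIndependent F (fun s => fun l => (p s l).eval 0) ∧
        m = (gsupp fun s => truncv 0 j (Matrix.vecMul (p s) G2)).ncard } := by
  rintro m ⟨p, hp, rfl⟩
  set x : Fin r → C1 := fun s => ⟨Matrix.vecMul (p s) G1, vecMul_mem C1 G1 hG1 _⟩ with hx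
  have hex : ∀ s, ∃ qs : Fin k → Polynomial F,
      Matrix.vecMul qs G2 = ((φ (x s) : C2) : Fin n → Polynomial F) := by
    intro s
    have hmem : ((φ (x s) : C2) : Fin n → Polynomial F)
        ∈ Submodule.span (Polynomial F) (Set.range fun i => G2 i) := by
      rw [hG2.2]; exact (φ (x s)).2
    obtain ⟨c, hc⟩ := (Submodule.mem_span_range_iff_exists_fun (Polynomial F)).1 hmem
    exact ⟨c, by rw [vecMul_eq_sum']; exact hc⟩
  choose q hq using hex
  -- coercion computations
  have hcoe : ∀ g : Fin r → F,
      (((∑ s, Polynomial.C (g s) • x s : C1)) : Fin n → Polynomial F)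
        = Matrix.vecMul (∑ s, Polynomial.C (g s) • p s) G1 := by
    intro g
    rw [vecMul_sum_smul]
    simp [hx]
  have hφcoe : ∀ g : Fin r → F,
      ((φ (∑ s, Polynomial.C (g s) • x s) : C2) : Fin n → Polynomial F)
        = Matrix.vecMul (∑ s, Polynomial.C (g s) • q s) G2 := by
    intro g
    rw [map_sum, vecMul_sum_smul]
    simp only [map_smul]
    push_cast
    exact Finset.sum_congr rfl fun s _ => by rw [hq s]
  -- linear independence of q at 0
  have hqli : LinearIndependent F (fun s => fun l => ((q s) l).eval 0) := by
    rw [Fintype.linearIndependent_iff]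
    intro g hg
    set w : Fin k → Polynomial F := ∑ s, Polynomial.C (g s) • q s with hw
    have hw0 : ∀ l, (w l).coeff 0 = 0 := by
      intro l
      have hgl : ∑ s, g s * ((q s) l).eval 0 = 0 := by
        have := congrFun hg l
        simpa [Finset.sum_apply] using this
      rw [hw]
      simp only [Finset.sum_apply, Pi.smul_apply, smul_eq_mul, Polynomial.finset_sum_coeff,
        Polynomial.coeff_C_mul]
      simpa [Polynomial.coeff_zero_eq_eval_zero] using hgl
    have hwX : w = (Polynomial.X : Polynomial F) • fun l => (w l).divX := by
      funext l
      simp only [Pi.smul_apply, smul_eq_mul]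
      have h2 := Polynomial.X_mul_divX_add (w l)
      rw [hw0 l] at h2
      simpa using h2.symm
    have hzmem : Matrix.vecMul (fun l => (w l).divX) G2 ∈ C2 := vecMul_mem C2 G2 hG2 _
    have hφy : φ (∑ s, Polynomial.C (g s) • x s)
        = (Polynomial.X : Polynomial F) • (⟨_, hzmem⟩ : C2) := by
      apply Subtype.ext
      rw [Submodule.coe_smul]
      show _ = (Polynomial.X : Polynomial F) • Matrix.vecMul (fun l => (w l).divX) G2
      rw [hφcoe g, ← hw, ← vecMul_smul', ← hwX]
    have hy : (∑ s, Polynomial.C (g s) • x s)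
        = (Polynomial.X : Polynomial F) • φ.symm (⟨_, hzmem⟩ : C2) := by
      rw [← map_smul, ← hφy, φ.symm_apply_apply]
    obtain ⟨e, he⟩ : ∃ e : Fin k → Polynomial F,
        Matrix.vecMul e G1 = ((φ.symm (⟨_, hzmem⟩ : C2) : C1) : Fin n → Polynomial F) := by
      have hmem : ((φ.symm (⟨_, hzmem⟩ : C2) : C1) : Fin n → Polynomial F)
          ∈ Submodule.span (Polynomial F) (Set.range fun i => G1 i) := by
        rw [hG1.2]; exact (φ.symm (⟨_, hzmem⟩ : C2)).2
      obtain ⟨c, hc⟩ := (Submodule.mem_span_range_iff_exists_fun (Polynomial F)).1 hmem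
      exact ⟨c, by rw [vecMul_eq_sum']; exact hc⟩
    have hveq : Matrix.vecMul (∑ s, Polynomial.C (g s) • p s) G1
        = Matrix.vecMul ((Polynomial.X : Polynomial F) • e) G1 := by
      rw [← hcoe g, hy, Submodule.coe_smul, ← he, vecMul_smul']
    have hpe : (∑ s, Polynomial.C (g s) • p s) = (Polynomial.X : Polynomial F) • e :=
      vecMul_injective C1 G1 hG1 _ _ hveq
    -- evaluate coefficient 0 at each l
    have hg0 : ∀ l, ∑ s, g s * ((p s) l).eval 0 = 0 := by
      intro l
      have := congrFun hpe l
      have h3 := congrArg (fun pp => Polynomial.coeff pp 0) this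
      simp only [Finset.sum_apply, Pi.smul_apply, smul_eq_mul, Polynomial.finset_sum_coeff,
        Polynomial.coeff_C_mul, Polynomial.mul_coeff_zero, Polynomial.coeff_X_zero,
        zero_mul] at h3
      simpa [Polynomial.coeff_zero_eq_eval_zero] using h3
    have := Fintype.linearIndependent_iff.1 hp g ?_
    · exact this
    · funext l
      simpa [Finset.sum_apply] using hg0 l
  -- weight equality for every F-linear combination
  have hwteq : ∀ g : Fin r → F,
      wtv (truncv 0 j (∑ s, Polynomial.C (g s) • Matrix.vecMul (p s) G1)) =
      wtv (truncv 0 j (∑ s, Polynomial.C (g s) • Matrix.vecMul (q s) G2)) := by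
    intro g
    have h1 := hφ j (∑ s, Polynomial.C (g s) • x s)
    rw [hcoe g, hφcoe g, vecMul_sum_smul, vecMul_sum_smul] at h1
    simpa [hx] using h1
  refine ⟨q, hqli, ?_⟩
  rw [ncard_gsupp_trunc, ncard_gsupp_trunc]
  exact card_eq_of_wt_eq hr j _ _ hwteq

end ConvCodeAux


open ConvCode
/-- `r`-generalized column distances are invariant under equivalence. -/
theorem gcdLim_equiv_invariant {F : Type*} [Field F] [Fintype F] {n k : ℕ}
    (C1 C2 : Submodule (Polynomial F) (Fin n → Polynomial F))
    (hk : 1 ≤ k) (hkn : k ≤ n)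
    (G1 : Matrix (Fin k) (Fin n) (Polynomial F)) (hG1 : IsGenMat C1 G1)
    (G2 : Matrix (Fin k) (Fin n) (Polynomial F)) (hG2 : IsGenMat C2 G2)
    (φ : C1 ≃ₗ[Polynomial F] C2) (hφ : IsEquiv C1 C2 φ) :
    ∀ r : ℕ, 1 ≤ r → r ≤ k → gcdLim G1 r = gcdLim G2 r := by
  intro r hr _
  have hsym := ConvCodeAux.isEquiv_symm C1 C2 φ hφ
  have hj : ∀ j, gcdJ G1 r j = gcdJ G2 r j := by
    intro j
    unfold gcdJ
    refine congrArg sInf ?_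
    exact Set.Subset.antisymm
      (ConvCodeAux.gcd_set_subset C1 C2 G1 G2 hG1 hG2 φ hφ hr j)
      (ConvCodeAux.gcd_set_subset C2 C1 G2 G1 hG2 hG1 φ.symm hsym hr j)
  unfold gcdLim
  refine congrArg (fun f => Filter.limsup f Filter.atTop) ?_
  funext j
  exact hj j
end

section
/- Let C be a convolutional code in F[x]^n of rank k with memory δ1, over a finite field F with q elements, and let 1 ≤ r ≤ k. If j̄ = min{ j ∈ ℕ : d_j^r(C) = d^r(C) }, then j̄ < (n(δ1+1)+1)·q^{δ1·k·r}. -/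
open Polynomial

open ConvCode

section GcdJAuxSection

variable {F : Type*} [Field F] [Fintype F] {n k : ℕ}

namespace GcdJAux

set_option linter.unusedSectionVars false

variable {r : ℕ}

lemma coeff_truncp (h j : ℕ) (P : Polynomial F) (m : ℕ) :
    (truncp h j P).coeff m = if h ≤ m ∧ m ≤ j then P.coeff m else 0 := by
  unfold truncp
  rw [finset_sum_coeff]
  simp only [coeff_C_mul, coeff_X_pow, mul_ite, mul_one, mul_zero]
  rw [Finset.sum_ite_eq (Finset.Icc h j) m (fun i => P.coeff i)]
  simp [Finset.mem_Icc]

lemma coeff_vecMul (G : Matrix (Fin k) (Fin n) (Polynomial F))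
    (p : Fin k → Polynomial F) (ℓ : Fin n) (m : ℕ) :
    ((Matrix.vecMul p G) ℓ).coeff m
      = ∑ l, ∑ i ∈ Finset.range (m + 1), (p l).coeff i * (G l ℓ).coeff (m - i) := by
  have h1 : (Matrix.vecMul p G) ℓ = ∑ l, p l * G l ℓ := by
    simp [Matrix.vecMul, dotProduct]
  rw [h1, finset_sum_coeff]
  refine Finset.sum_congr rfl fun l _ => ?_
  rw [Polynomial.coeff_mul, Finset.Nat.sum_antidiagonal_eq_sum_range_succ_mk]

lemma gsupp_trunc_mono {r : ℕ} (c : Fin r → Fin n → Polynomial F) {j j' : ℕ} (h : j ≤ j') :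
    gsupp (fun s => truncv 0 j (c s)) ⊆ gsupp (fun s => truncv 0 j' (c s)) := by
  rintro ⟨ℓ, m⟩ ⟨s, hs⟩
  refine ⟨s, ?_⟩
  simp only [truncv, coeff_truncp] at hs ⊢
  split at hs
  · rename_i hc
    rw [if_pos ⟨hc.1, hc.2.trans h⟩]; exact hs
  · exact absurd rfl hs

lemma gsupp_trunc_subset_Iic {r : ℕ} (c : Fin r → Fin n → Polynomial F) (j : ℕ) :
    gsupp (fun s => truncv 0 j (c s)) ⊆ ↑(Finset.univ (α := Fin n) ×ˢ Finset.Iic j) := by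
  rintro ⟨ℓ, m⟩ ⟨s, hs⟩
  simp only [truncv, coeff_truncp] at hs
  split at hs
  · rename_i hc
    simp [Finset.mem_Iic, hc.2]
  · exact absurd rfl hs

lemma gsupp_trunc_finite {r : ℕ} (c : Fin r → Fin n → Polynomial F) (j : ℕ) :
    (gsupp (fun s => truncv 0 j (c s))).Finite :=
  Set.Finite.subset (Finset.univ ×ˢ Finset.Iic j).finite_toSet (gsupp_trunc_subset_Iic c j)

lemma LI_single (hrk : r ≤ k) :
    LinearIndependent F (fun (s : Fin r) => fun l =>
      ((Pi.single (M := fun _ : Fin k => _) (Fin.castLE hrk s) (1 : Polynomial F) l).eval 0)) := by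
  have h1 : (fun (s : Fin r) => fun l =>
      ((Pi.single (M := fun _ : Fin k => _) (Fin.castLE hrk s) (1 : Polynomial F) l).eval 0))
      = fun s => Pi.single (M := fun _ : Fin k => _) (Fin.castLE hrk s) (1 : F) := by
    funext s l
    by_cases h : l = Fin.castLE hrk s <;> simp [Pi.single_apply, h]
  rw [h1]
  have h2 : (fun s : Fin r => Pi.single (M := fun _ : Fin k => _) (Fin.castLE hrk s) (1 : F))
      = (fun i : Fin k => Pi.single (M := fun _ : Fin k => _) i (1:F)) ∘ (Fin.castLE hrk) := rfl
  rw [h2]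
  have h3 : LinearIndependent F (fun i : Fin k => Pi.single (M := fun _ : Fin k => _) i (1:F)) := by
    have := (Pi.basisFun F (Fin k)).linearIndependent
    have he : ⇑(Pi.basisFun F (Fin k)) = fun i : Fin k => Pi.single (M := fun _ : Fin k => _) i (1:F) := by
      funext i; exact Pi.basisFun_apply F (Fin k) i
    rwa [he] at this
  exact h3.comp _ (Fin.castLE_injective hrk)

lemma Sset_nonempty (G : Matrix (Fin k) (Fin n) (Polynomial F)) (hrk : r ≤ k) (j : ℕ) :
    { m | ∃ p : Fin r → Fin k → Polynomial F,
      LinearIndependent F (fun s => fun l => (p s l).eval 0) ∧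
      m = (gsupp fun s => truncv 0 j (Matrix.vecMul (p s) G)).ncard }.Nonempty :=
  ⟨_, fun s => Pi.single (Fin.castLE hrk s) (1 : Polynomial F), LI_single hrk, rfl⟩

lemma gcdJ_le (G : Matrix (Fin k) (Fin n) (Polynomial F)) {r j : ℕ}
    (p : Fin r → Fin k → Polynomial F)
    (hLI : LinearIndependent F (fun s => fun l => (p s l).eval 0)) :
    gcdJ G r j ≤ (gsupp fun s => truncv 0 j (Matrix.vecMul (p s) G)).ncard :=
  Nat.sInf_le ⟨p, hLI, rfl⟩

lemma gcdJ_mono (G : Matrix (Fin k) (Fin n) (Polynomial F)) {r : ℕ} (hrk : r ≤ k) :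
    Monotone (gcdJ G r) := by
  intro j j' h
  have hmem := Nat.sInf_mem (Sset_nonempty G hrk j')
  obtain ⟨p, hLI, hp⟩ := hmem
  calc gcdJ G r j ≤ (gsupp fun s => truncv 0 j (Matrix.vecMul (p s) G)).ncard :=
        gcdJ_le G p hLI
    _ ≤ (gsupp fun s => truncv 0 j' (Matrix.vecMul (p s) G)).ncard :=
        Set.ncard_le_ncard (gsupp_trunc_mono _ h) (gsupp_trunc_finite _ j')
    _ = gcdJ G r j' := hp.symm

lemma gcdJ_le_bound (G : Matrix (Fin k) (Fin n) (Polynomial F)) {r : ℕ} (hrk : r ≤ k)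
    (δ1 : ℕ) (hdeg : ∀ l ℓ, (G l ℓ).natDegree ≤ δ1) (j : ℕ) :
    gcdJ G r j ≤ n * (δ1 + 1) := by
  set p : Fin r → Fin k → Polynomial F :=
    fun s => Pi.single (Fin.castLE hrk s) (1 : Polynomial F) with hpdef
  refine le_trans (gcdJ_le G p (LI_single hrk)) ?_
  have hsub : (gsupp fun s => truncv 0 j (Matrix.vecMul (p s) G)) ⊆
      ↑(Finset.univ (α := Fin n) ×ˢ Finset.Iic δ1) := by
    rintro ⟨ℓ, m⟩ ⟨s, hs⟩
    simp only [truncv, coeff_truncp] at hs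
    split at hs
    · have hvm : Matrix.vecMul (p s) G = G (Fin.castLE hrk s) := by
        rw [hpdef]; exact Matrix.single_one_vecMul _ G
      rw [hvm] at hs
      have : m ≤ (G (Fin.castLE hrk s) ℓ).natDegree := le_natDegree_of_ne_zero hs
      simp only [Finset.coe_product, Set.mem_prod, Finset.mem_coe, Finset.mem_univ,
        Finset.mem_Iic, true_and]
      exact this.trans (hdeg _ _)
    · exact absurd rfl hs
  calc (gsupp fun s => truncv 0 j (Matrix.vecMul (p s) G)).ncard
      ≤ (↑(Finset.univ (α := Fin n) ×ˢ Finset.Iic δ1) : Set (Fin n × ℕ)).ncard :=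
        Set.ncard_le_ncard hsub (Finset.univ ×ˢ Finset.Iic δ1).finite_toSet
    _ = n * (δ1 + 1) := by
        rw [Set.ncard_coe_finset, Finset.card_product]
        simp

noncomputable def bfun (p : Fin r → Fin k → Polynomial F) (N d : ℕ) : ℕ → Fin r → Fin k → F
  | i => if i ≤ N then (fun s l => (p s l).coeff i) else bfun p N d (i - (d + 1))
termination_by i => i
decreasing_by simp_all; omega

lemma bfun_le (p : Fin r → Fin k → Polynomial F) (N d : ℕ) {i : ℕ} (h : i ≤ N) :
    bfun p N d i = fun s l => (p s l).coeff i := by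
  rw [bfun]; simp [h]

lemma bfun_gt (p : Fin r → Fin k → Polynomial F) (N d : ℕ) {i : ℕ} (h : N < i) :
    bfun p N d i = bfun p N d (i - (d + 1)) := by
  rw [bfun]; simp [Nat.not_le.mpr h]

noncomputable def Yf (G : Matrix (Fin k) (Fin n) (Polynomial F))
    (b : ℕ → Fin r → Fin k → F) (m : ℕ) (s : Fin r) (ℓ : Fin n) : F :=
  ∑ l, ∑ i ∈ Finset.range (m + 1), b i s l * (G l ℓ).coeff (m - i)

lemma core (G : Matrix (Fin k) (Fin n) (Polynomial F)) {r : ℕ} (hrk : r ≤ k)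
    (δ1 : ℕ) (hdeg : ∀ l ℓ, (G l ℓ).natDegree ≤ δ1)
    {T : ℕ} (hT : T = Fintype.card F ^ (δ1 * k * r))
    (a : ℕ) (heq : gcdJ G r a = gcdJ G r (a + T)) :
    ∀ j, gcdJ G r j ≤ gcdJ G r a := by
  classical
  -- extract a minimizer at level a + T
  obtain ⟨p, hLI, hp⟩ := Nat.sInf_mem (Sset_nonempty G hrk (a + T))
  have hcard_aT : (gsupp fun s => truncv 0 (a + T) (Matrix.vecMul (p s) G)).ncard = gcdJ G r a := by
    rw [heq]; exact hp.symm
  have hge : gcdJ G r a ≤ (gsupp fun s => truncv 0 a (Matrix.vecMul (p s) G)).ncard :=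
    gcdJ_le G p hLI
  have hsub : (gsupp fun s => truncv 0 a (Matrix.vecMul (p s) G)) ⊆
      (gsupp fun s => truncv 0 (a + T) (Matrix.vecMul (p s) G)) :=
    gsupp_trunc_mono _ (Nat.le_add_right a T)
  have hcard_a : (gsupp fun s => truncv 0 a (Matrix.vecMul (p s) G)).ncard = gcdJ G r a :=
    le_antisymm (hcard_aT ▸ Set.ncard_le_ncard hsub (gsupp_trunc_finite _ _)) hge
  have hseteq : (gsupp fun s => truncv 0 a (Matrix.vecMul (p s) G)) =
      (gsupp fun s => truncv 0 (a + T) (Matrix.vecMul (p s) G)) :=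
    Set.eq_of_subset_of_ncard_le hsub (by rw [hcard_aT, hcard_a]) (gsupp_trunc_finite _ _)
  -- the gap property
  have hgap : ∀ m, a < m → m ≤ a + T → ∀ s ℓ, ((Matrix.vecMul (p s) G) ℓ).coeff m = 0 := by
    intro m ham hm s ℓ
    by_contra hne
    have hmem : (⟨ℓ, m⟩ : Fin n × ℕ) ∈
        (gsupp fun s => truncv 0 (a + T) (Matrix.vecMul (p s) G)) := by
      refine ⟨s, ?_⟩
      simp only [truncv, coeff_truncp]
      rw [if_pos ⟨Nat.zero_le m, hm⟩]
      exact hne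
    rw [← hseteq] at hmem
    obtain ⟨s', hs'⟩ := hmem
    simp only [truncv, coeff_truncp] at hs'
    split at hs'
    · rename_i hc
      exact absurd hc.2 (not_le.mpr ham)
    · exact absurd rfl hs'
  -- pigeonhole on states
  have hTcard : Fintype.card (Fin δ1 → Fin r → Fin k → F) = T := by
    rw [hT]
    simp only [Fintype.card_fun, Fintype.card_fin, ← pow_mul]
    congr 1
    ring
  set st : ℕ → (Fin δ1 → Fin r → Fin k → F) :=
    fun t => fun e s l => if (e : ℕ) ≤ a + t then (p s l).coeff (a + t - e) else 0 with hstdef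
  obtain ⟨t1, ht1, t2, ht2, htne, hst⟩ :=
    Finset.exists_ne_map_eq_of_card_lt_of_maps_to
      (s := Finset.range (T + 1)) (t := (Finset.univ : Finset (Fin δ1 → Fin r → Fin k → F)))
      (by simp [hTcard]) (fun t _ => Finset.mem_univ (st t))
  clear hp
  obtain ⟨u1, u2, hu12, hu2T, hstu⟩ : ∃ u1 u2 : ℕ, u1 < u2 ∧ u2 ≤ T ∧ st u1 = st u2 := by
    rcases lt_or_gt_of_ne htne with h | h
    · exact ⟨t1, t2, h, Nat.lt_succ_iff.mp (Finset.mem_range.mp ht2), hst⟩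
    · exact ⟨t2, t1, h, Nat.lt_succ_iff.mp (Finset.mem_range.mp ht1), hst.symm⟩
  clear hst htne ht1 ht2
  set d := u2 - u1 with hddef
  have hd1 : 1 ≤ d := by omega
  set N := a + u2 with hNdef
  set b := bfun p N (d - 1) with hbdef
  have hstep : d - 1 + 1 = d := Nat.succ_pred_eq_of_pos hd1
  -- Lemma A: periodicity at the boundary
  have hA : ∀ i, N < i + δ1 → b i = (fun s l => if d ≤ i then b (i - d) s l else 0) := by
    intro i hi
    funext s l
    rcases le_or_gt i N with hiN | hiN
    · have hbi : b i s l = (p s l).coeff i := by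
        rw [hbdef, bfun_le p N (d - 1) hiN]
      have he1 : a + u2 - i < δ1 := by omega
      have hse := congrFun (congrFun (congrFun hstu ⟨a + u2 - i, he1⟩) s) l
      simp only [hstdef] at hse
      rw [if_pos (by omega : a + u2 - i ≤ a + u2)] at hse
      rw [(by omega : a + u2 - (a + u2 - i) = i)] at hse
      by_cases hdi : d ≤ i
      · have hbid : b (i - d) s l = (p s l).coeff (i - d) := by
          rw [hbdef, bfun_le p N (d - 1) (by omega : i - d ≤ N)]
        rw [if_pos hdi, hbi, hbid, ← hse, if_pos (by omega : a + u2 - i ≤ a + u1)]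
        congr 1
        omega
      · rw [if_neg hdi, hbi, ← hse, if_neg (by omega : ¬ (a + u2 - i ≤ a + u1))]
    · rw [if_pos (by omega : d ≤ i), hbdef]
      conv_lhs => rw [bfun_gt p N (d - 1) hiN]
      rw [hstep]
  -- Lemma C: for m ≤ N the Y-function is the coefficient of the original codeword
  have hC : ∀ m, m ≤ N → ∀ s ℓ, Yf G b m s ℓ = ((Matrix.vecMul (p s) G) ℓ).coeff m := by
    intro m hm s ℓ
    rw [coeff_vecMul]
    unfold Yf
    refine Finset.sum_congr rfl fun l _ => Finset.sum_congr rfl fun i hi => ?_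
    have hiN : i ≤ N := le_trans (Nat.lt_succ_iff.mp (Finset.mem_range.mp hi)) hm
    have hbi : b i s l = (p s l).coeff i := by rw [hbdef, bfun_le p N (d - 1) hiN]
    rw [hbi]
  -- Lemma B: the Y-function vanishes above degree a
  have hB : ∀ m, a < m → ∀ s ℓ, Yf G b m s ℓ = 0 := by
    intro m
    induction m using Nat.strong_induction_on with
    | _ m ih =>
      intro ham s ℓ
      rcases le_or_gt m N with hmN | hmN
      · rw [hC m hmN s ℓ]
        exact hgap m ham (by omega) s ℓ
      · have hYstep : Yf G b m s ℓ = Yf G b (m - d) s ℓ := by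
          unfold Yf
          refine Finset.sum_congr rfl fun l _ => ?_
          have step1 : ∑ i ∈ Finset.range (m + 1), b i s l * (G l ℓ).coeff (m - i)
              = ∑ i ∈ Finset.range (m + 1),
                  (if d ≤ i then b (i - d) s l else 0) * (G l ℓ).coeff (m - i) := by
            refine Finset.sum_congr rfl fun i _ => ?_
            rcases lt_or_ge N (i + δ1) with hcase | hcase
            · rw [congrFun (congrFun (hA i hcase) s) l]
            · have hg : (G l ℓ).coeff (m - i) = 0 := by
                apply coeff_eq_zero_of_natDegree_lt
                have := hdeg l ℓ
                omega
              rw [hg, mul_zero, mul_zero]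
          have step2 : ∑ i ∈ Finset.range (m + 1),
                  (if d ≤ i then b (i - d) s l else 0) * (G l ℓ).coeff (m - i)
              = ∑ i ∈ Finset.Ico d (m + 1), b (i - d) s l * (G l ℓ).coeff (m - i) := by
            rw [Finset.range_eq_Ico,
              ← Finset.sum_Ico_consecutive _ (Nat.zero_le d) (by omega : d ≤ m + 1)]
            have hz : ∑ i ∈ Finset.Ico 0 d,
                (if d ≤ i then b (i - d) s l else 0) * (G l ℓ).coeff (m - i) = 0 := by
              apply Finset.sum_eq_zero
              intro i hi
              rw [if_neg (by simp only [Finset.mem_Ico] at hi; omega), zero_mul]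
            rw [hz, zero_add]
            refine Finset.sum_congr rfl fun i hi => ?_
            rw [if_pos (Finset.mem_Ico.mp hi).1]
          have step3 : ∑ i ∈ Finset.Ico d (m + 1), b (i - d) s l * (G l ℓ).coeff (m - i)
              = ∑ i ∈ Finset.range (m - d + 1), b i s l * (G l ℓ).coeff (m - d - i) := by
            rw [Finset.sum_Ico_eq_sum_range]
            rw [(by omega : m + 1 - d = m - d + 1)]
            refine Finset.sum_congr rfl fun i hi => ?_
            have hi' : i ≤ m - d := Nat.lt_succ_iff.mp (Finset.mem_range.mp hi)
            rw [(by omega : d + i - d = i), (by omega : m - (d + i) = m - d - i)]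
          rw [step1, step2, step3]
        rw [hYstep]
        exact ih (m - d) (by omega) (by omega) s ℓ
  -- the candidate for an arbitrary level j
  intro j
  rcases lt_or_ge j a with hja | hja
  · exact gcdJ_mono G hrk (le_of_lt hja)
  · set P : Fin r → Fin k → Polynomial F :=
      fun s l => ∑ i ∈ Finset.range (j + 1), Polynomial.monomial i (b i s l) with hPdef
    have hPco : ∀ s l m, (P s l).coeff m = if m ≤ j then b m s l else 0 := by
      intro s l m
      rw [hPdef]
      simp only []
      rw [finset_sum_coeff]
      simp only [Polynomial.coeff_monomial]
      rw [Finset.sum_ite_eq' (Finset.range (j + 1)) m (fun i => b i s l)]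
      simp [Finset.mem_range, Nat.lt_succ_iff]
    have hPev : (fun s => fun l => (P s l).eval 0) = (fun s => fun l => (p s l).eval 0) := by
      funext s l
      rw [← Polynomial.coeff_zero_eq_eval_zero, ← Polynomial.coeff_zero_eq_eval_zero,
        hPco s l 0, if_pos (Nat.zero_le j)]
      rw [hbdef, bfun_le p N (d - 1) (Nat.zero_le N)]
    have hPvm : ∀ s ℓ m, m ≤ j → ((Matrix.vecMul (P s) G) ℓ).coeff m = Yf G b m s ℓ := by
      intro s ℓ m hm
      rw [coeff_vecMul]
      unfold Yf
      refine Finset.sum_congr rfl fun l _ => Finset.sum_congr rfl fun i hi => ?_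
      have hij : i ≤ j := le_trans (Nat.lt_succ_iff.mp (Finset.mem_range.mp hi)) hm
      rw [hPco s l i, if_pos hij]
    have hgseq : (gsupp fun s => truncv 0 j (Matrix.vecMul (P s) G))
        = (gsupp fun s => truncv 0 a (Matrix.vecMul (p s) G)) := by
      ext ⟨ℓ, m⟩
      simp only [gsupp, truncv, Set.mem_setOf_eq, coeff_truncp]
      constructor
      · rintro ⟨s, hs⟩
        split at hs
        · rename_i hc
          have hYm : Yf G b m s ℓ ≠ 0 := by
            rw [← hPvm s ℓ m hc.2]; exact hs
          have hma : m ≤ a := by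
            by_contra hma
            exact hYm (hB m (not_le.mp hma) s ℓ)
          refine ⟨s, ?_⟩
          rw [if_pos ⟨Nat.zero_le m, hma⟩, ← hC m (by omega) s ℓ]
          exact hYm
        · exact absurd rfl hs
      · rintro ⟨s, hs⟩
        split at hs
        · rename_i hc
          refine ⟨s, ?_⟩
          rw [if_pos ⟨Nat.zero_le m, le_trans hc.2 hja⟩]
          rw [hPvm s ℓ m (le_trans hc.2 hja), hC m (by omega) s ℓ]
          exact hs
        · exact absurd rfl hs
    calc gcdJ G r j ≤ (gsupp fun s => truncv 0 j (Matrix.vecMul (P s) G)).ncard :=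
          gcdJ_le G P (by rw [hPev]; exact hLI)
      _ = gcdJ G r a := by rw [hgseq, hcard_a]

lemma exists_plateau (G : Matrix (Fin k) (Fin n) (Polynomial F)) {r : ℕ} (hrk : r ≤ k)
    (δ1 : ℕ) (hdeg : ∀ l ℓ, (G l ℓ).natDegree ≤ δ1) (T : ℕ) :
    ∃ i, i ≤ n * (δ1 + 1) ∧ gcdJ G r (i * T) = gcdJ G r (i * T + T) := by
  by_contra hno
  push_neg at hno
  have hlt : ∀ i, i ≤ n * (δ1 + 1) → gcdJ G r (i * T) < gcdJ G r ((i + 1) * T) := by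
    intro i hi
    have h1 : (i + 1) * T = i * T + T := by ring
    rw [h1]
    exact lt_of_le_of_ne (gcdJ_mono G hrk (Nat.le_add_right _ _)) (hno i hi)
  have key : ∀ i, i ≤ n * (δ1 + 1) + 1 → i ≤ gcdJ G r (i * T) := by
    intro i
    induction i with
    | zero => intro _; exact Nat.zero_le _
    | succ i ih =>
      intro hi
      have h1 := ih (by omega)
      have h2 := hlt i (by omega)
      omega
  have h3 := key (n * (δ1 + 1) + 1) le_rfl
  have hb := gcdJ_le_bound G hrk δ1 hdeg ((n * (δ1 + 1) + 1) * T)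
  omega

theorem main {r : ℕ} (G : Matrix (Fin k) (Fin n) (Polynomial F)) (hrk : r ≤ k)
    (δ1 : ℕ) (hδ1 : δ1 = Finset.univ.sup fun i => degv (G i))
    (jbar : ℕ) (hjbar : jbar = sInf { j : ℕ | gcdJ G r j = gcdLim G r }) :
    jbar < (n * (δ1 + 1) + 1) * (Fintype.card F) ^ (δ1 * k * r) := by
  have hdeg : ∀ l ℓ, (G l ℓ).natDegree ≤ δ1 := by
    intro l ℓ
    rw [hδ1]
    exact le_trans (Finset.le_sup (f := fun ℓ => (G l ℓ).natDegree) (Finset.mem_univ ℓ))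
      (Finset.le_sup (f := fun i => degv (G i)) (Finset.mem_univ l))
  set T := (Fintype.card F) ^ (δ1 * k * r) with hTdef
  have hT1 : 1 ≤ T := Nat.one_le_iff_ne_zero.mpr (pow_ne_zero _ Fintype.card_ne_zero)
  obtain ⟨i, hiB, hieq⟩ := exists_plateau G hrk δ1 hdeg T
  have hall : ∀ j, gcdJ G r j ≤ gcdJ G r (i * T) :=
    core G hrk δ1 hdeg hTdef (i * T) hieq
  have hconst : ∀ j, i * T ≤ j → gcdJ G r j = gcdJ G r (i * T) :=
    fun j hj => le_antisymm (hall j) (gcdJ_mono G hrk hj)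
  have hlim : gcdLim G r = gcdJ G r (i * T) := by
    unfold gcdLim
    have hev : (fun j => gcdJ G r j) =ᶠ[Filter.atTop] (fun _ => gcdJ G r (i * T)) :=
      Filter.eventually_atTop.mpr ⟨i * T, fun j hj => hconst j hj⟩
    rw [Filter.limsup_congr hev, Filter.limsup_const]
  have hmem : (i * T) ∈ {j : ℕ | gcdJ G r j = gcdLim G r} := by
    simp only [Set.mem_setOf_eq, hlim]
  have hjle : jbar ≤ i * T := hjbar ▸ Nat.sInf_le hmem
  have hle : i * T ≤ (n * (δ1 + 1)) * T := Nat.mul_le_mul_right T hiB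
  have hsplit : (n * (δ1 + 1) + 1) * T = (n * (δ1 + 1)) * T + T := by ring
  omega

end GcdJAux

end GcdJAuxSection

open ConvCode
/-- if `j̄` is the first index at which the `(r,j)`-generalized column distance
reaches its limit value `d^r(C)`, then `j̄ < (n(δ1+1)+1)·q^(δ1·k·r)`. -/
theorem gcdJ_stabilizes {F : Type*} [Field F] [Fintype F] {n k : ℕ}
    (C : Submodule (Polynomial F) (Fin n → Polynomial F))
    (hk : 1 ≤ k) (hkn : k ≤ n)
    (G : Matrix (Fin k) (Fin n) (Polynomial F)) (hG : IsGenMat C G) (hRR : RowReduced G)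
    (δ1 : ℕ) (hδ1 : δ1 = Finset.univ.sup fun i => degv (G i))
    (r : ℕ) (hr : 1 ≤ r) (hrk : r ≤ k)
    (jbar : ℕ) (hjbar : jbar = sInf { j : ℕ | gcdJ G r j = gcdLim G r }) :
    jbar < (n * (δ1 + 1) + 1) * (Fintype.card F) ^ (δ1 * k * r) := by
  exact GcdJAux.main G hrk δ1 hδ1 jbar hjbar
end

section
/- Let C be a noncatastrophic convolutional code in F[x]^n of rank k with generator matrix G, and let 1 ≤ r ≤ k. Then d^r(C) = min{ |supp{p_1G,…,p_rG}| : p_1,…,p_r ∈ F[x]^k with dim_F span(p_1(0),…,p_r(0)) = r }. -/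
open Polynomial

namespace ConvCode

variable {F : Type*} [Field F] [Fintype F] {n k : ℕ}

section Aux
set_option linter.unusedSectionVars false
set_option maxHeartbeats 1000000

lemma coeff_truncp (h j i : ℕ) (p : Polynomial F) :
    (truncp h j p).coeff i = if h ≤ i ∧ i ≤ j then p.coeff i else 0 := by
  unfold truncp
  rw [Polynomial.finset_sum_coeff]
  simp only [Polynomial.coeff_C_mul, Polynomial.coeff_X_pow, mul_ite, mul_one, mul_zero]
  rw [Finset.sum_ite_eq (Finset.Icc h j) i (fun i' => p.coeff i')]
  simp [Finset.mem_Icc]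

lemma degree_truncp_le (h j : ℕ) (p : Polynomial F) : (truncp h j p).degree ≤ (j : ℕ) := by
  refine (Polynomial.degree_sum_le _ _).trans ?_
  refine Finset.sup_le fun i hi => ?_
  refine (Polynomial.degree_C_mul_X_pow_le i _).trans ?_
  exact_mod_cast (Finset.mem_Icc.1 hi).2

lemma gsupp_finite {r : ℕ} (d : Fin r → Fin n → Polynomial F) : (gsupp d).Finite := by
  have hsub : gsupp d ⊆ ⋃ (s : Fin r) (ℓ : Fin n), (fun i => (ℓ, i)) '' ↑(d s ℓ).support := by
    rintro ⟨ℓ, i⟩ ⟨s, hs⟩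
    exact Set.mem_iUnion.2 ⟨s, Set.mem_iUnion.2 ⟨ℓ, ⟨i, Polynomial.mem_support_iff.2 hs, rfl⟩⟩⟩
  exact Set.Finite.subset (Set.finite_iUnion fun s => Set.finite_iUnion fun ℓ =>
    ((d s ℓ).support.finite_toSet.image _)) hsub

lemma mem_gsupp_trunc {r j : ℕ} {d : Fin r → Fin n → Polynomial F} {q : Fin n × ℕ} :
    q ∈ gsupp (fun s => truncv 0 j (d s)) ↔ q.2 ≤ j ∧ q ∈ gsupp d := by
  unfold gsupp truncv
  simp only [Set.mem_setOf_eq, coeff_truncp, Nat.zero_le, true_and]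
  by_cases h : q.2 ≤ j <;> simp [h]

lemma gsupp_trunc_subset {r j : ℕ} (d : Fin r → Fin n → Polynomial F) :
    gsupp (fun s => truncv 0 j (d s)) ⊆ gsupp d := fun _ hq => (mem_gsupp_trunc.1 hq).2

lemma li_single {r : ℕ} (hrk : r ≤ k) :
    LinearIndependent F (fun s : Fin r => (Pi.single (Fin.castLE hrk s) (1:F) : Fin k → F)) := by
  have h := (Pi.basisFun F (Fin k)).linearIndependent.comp (Fin.castLE hrk)
    (Fin.castLE_injective hrk)
  have h2 : ⇑(Pi.basisFun F (Fin k)) ∘ Fin.castLE hrk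
      = fun s : Fin r => (Pi.single (Fin.castLE hrk s) (1:F) : Fin k → F) := by
    funext s; simp [Function.comp, Pi.basisFun_apply]
  rwa [h2] at h

lemma li_std {r : ℕ} (hrk : r ≤ k) :
    LinearIndependent F (fun s : Fin r => fun l : Fin k =>
      ((if l = Fin.castLE hrk s then (1:Polynomial F) else 0).eval 0)) := by
  have h : (fun s : Fin r => fun l : Fin k =>
      ((if l = Fin.castLE hrk s then (1:Polynomial F) else 0).eval 0))
      = fun s => (Pi.single (Fin.castLE hrk s) (1:F) : Fin k → F) := by
    funext s l
    by_cases h : l = Fin.castLE hrk s <;> simp [h, Pi.single_apply]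
  rw [h]; exact li_single hrk

lemma sum_smul_eq_vecMul (v : Fin k → Polynomial F) (G : Matrix (Fin k) (Fin n) (Polynomial F)) :
    ∑ i, v i • G i = Matrix.vecMul v G := by
  funext ℓ
  simp [Matrix.vecMul, dotProduct, Finset.sum_apply, smul_eq_mul]

lemma vecMul_inj {G : Matrix (Fin k) (Fin n) (Polynomial F)}
    (hLI : LinearIndependent (Polynomial F) (fun i => G i)) (u v : Fin k → Polynomial F)
    (huv : Matrix.vecMul u G = Matrix.vecMul v G) : u = v := by
  have h0 : ∑ i, (u - v) i • G i = 0 := by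
    rw [sum_smul_eq_vecMul, Matrix.sub_vecMul, huv, sub_self]
  funext i
  have := Fintype.linearIndependent_iff.1 hLI (u - v) h0 i
  simpa [sub_eq_zero] using this

lemma row_eq_of_genMat {C : Submodule (Polynomial F) (Fin n → Polynomial F)}
    {G G' : Matrix (Fin k) (Fin n) (Polynomial F)}
    (hG : IsGenMat C G) (hG' : IsGenMat C G') :
    ∃ U : Matrix (Fin k) (Fin k) (Polynomial F), G = U * G' := by
  have hU : ∀ i, ∃ u : Fin k → Polynomial F, ∑ j, u j • G' j = G i := by
    intro i
    refine (Submodule.mem_span_range_iff_exists_fun (Polynomial F) (v := fun j => G' j)).1 ?_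
    rw [hG'.2, ← hG.2]
    exact Submodule.subset_span ⟨i, rfl⟩
  choose U hUeq using hU
  refine ⟨Matrix.of U, Matrix.ext fun i ℓ => ?_⟩
  have := congrFun (hUeq i) ℓ
  rw [Matrix.mul_apply]
  simpa [Finset.sum_apply, smul_eq_mul] using this.symm

lemma exists_rightInv {C : Submodule (Polynomial F) (Fin n → Polynomial F)}
    {G G' : Matrix (Fin k) (Fin n) (Polynomial F)}
    (hG : IsGenMat C G) (hG' : IsGenMat C G')
    {H' : Matrix (Fin n) (Fin k) (Polynomial F)} (hH' : G' * H' = 1) :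
    ∃ H : Matrix (Fin n) (Fin k) (Polynomial F), G * H = 1 := by
  obtain ⟨U, hGU⟩ := row_eq_of_genMat hG hG'
  obtain ⟨V, hGV⟩ := row_eq_of_genMat hG' hG
  have hUV : U * V = 1 := by
    have h1 : (U * V) * G = (1 : Matrix (Fin k) (Fin k) (Polynomial F)) * G := by
      rw [Matrix.one_mul, Matrix.mul_assoc, ← hGV, ← hGU]
    refine Matrix.ext fun i j' => ?_
    have hrow : Matrix.vecMul ((U * V) i) G
        = Matrix.vecMul ((1 : Matrix (Fin k) (Fin k) (Polynomial F)) i) G := by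
      funext ℓ
      have := congrFun (congrFun h1 i) ℓ
      simpa [Matrix.mul_apply, Matrix.vecMul, dotProduct] using this
    exact congrFun (vecMul_inj hG.1 _ _ hrow) j'
  exact ⟨H' * V, by rw [hGU, Matrix.mul_assoc, ← Matrix.mul_assoc G' H' V, hH',
    Matrix.one_mul, hUV]⟩

lemma vecMul_apply' {m m' : ℕ} (v : Fin m → Polynomial F)
    (M : Matrix (Fin m) (Fin m') (Polynomial F)) (j : Fin m') :
    Matrix.vecMul v M j = ∑ i, v i * M i j := rfl

lemma key {r : ℕ} (G : Matrix (Fin k) (Fin n) (Polynomial F))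
    (H : Matrix (Fin n) (Fin k) (Polynomial F)) (hH : G * H = 1)
    (p : Fin r → Fin k → Polynomial F) (c : Fin r → Fin n → Polynomial F)
    (hcp : ∀ s, c s = Matrix.vecMul (p s) G)
    (M j : ℕ)
    (hj : M * (Finset.univ.sup (fun u : Fin n × Fin k => (H u.1 u.2).natDegree)
        + Finset.univ.sup (fun u : Fin k × Fin n => (G u.1 u.2).natDegree) + 1) ≤ j)
    (hlt : (gsupp fun s => truncv 0 j (c s)).ncard < M) :
    ∃ q : Fin r → Fin k → Polynomial F,
      (∀ s l, (q s l).eval 0 = (p s l).eval 0) ∧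
      gsupp (fun s => Matrix.vecMul (q s) G) ⊆ gsupp (fun s => truncv 0 j (c s)) := by
  classical
  set δ := Finset.univ.sup (fun u : Fin n × Fin k => (H u.1 u.2).natDegree) with hδ
  set γ := Finset.univ.sup (fun u : Fin k × Fin n => (G u.1 u.2).natDegree) with hγ
  set g := δ + γ + 1 with hg
  have hgpos : 0 < g := by omega
  have hfin : (gsupp fun s => truncv 0 j (c s)).Finite := gsupp_finite _
  set Bad : Finset ℕ := hfin.toFinset.image Prod.snd with hBadDef
  have hBadcard : Bad.card < M := by
    calc Bad.card ≤ hfin.toFinset.card := Finset.card_image_le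
    _ = (gsupp fun s => truncv 0 j (c s)).ncard := (Set.ncard_eq_toFinset_card _ hfin).symm
    _ < M := hlt
  have hgap : ∃ t, t < M ∧ ∀ i, t * g + 1 ≤ i → i ≤ (t + 1) * g → i ∉ Bad := by
    by_contra hcon
    push_neg at hcon
    choose f hf1 hf2 hf3 using hcon
    set F0 : ℕ → ℕ := fun t => if h : t < M then f t h else 0 with hF0
    have hdiv : ∀ t (h : t < M), (F0 t - 1) / g = t := by
      intro t h
      have e : F0 t = f t h := by simp [hF0, h]
      have h1 := hf1 t h
      have h2 := hf2 t h
      refine Nat.div_eq_of_lt_le ?_ ?_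
      · omega
      · have : (t + 1) * g ≤ t * g + g := by rw [Nat.succ_mul]
        omega
    have hmaps : ∀ t ∈ Finset.range M, F0 t ∈ Bad := by
      intro t ht
      have h := Finset.mem_range.1 ht
      have e : F0 t = f t h := by simp [hF0, h]
      rw [e]; exact hf3 t h
    have hinj : Set.InjOn F0 ↑(Finset.range M) := by
      intro t1 h1 t2 h2 he
      have h1' := Finset.mem_range.1 (by exact_mod_cast h1)
      have h2' := Finset.mem_range.1 (by exact_mod_cast h2)
      rw [← hdiv t1 h1', ← hdiv t2 h2', he]
    have := Finset.card_le_card_of_injOn F0 hmaps hinj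
    rw [Finset.card_range] at this
    omega
  obtain ⟨t, htM, hclean⟩ := hgap
  set a := t * g with ha
  have hsm : (t + 1) * g = a + g := by rw [Nat.succ_mul]
  have hbj : a + g ≤ j := by
    have h1 : (t + 1) * g ≤ M * g := Nat.mul_le_mul_right g htM
    omega
  have hgapc : ∀ s ℓ i, a + 1 ≤ i → i ≤ a + g → (c s ℓ).coeff i = 0 := by
    intro s ℓ i h1 h2
    by_contra hne
    have hmem : (ℓ, i) ∈ gsupp (fun s => truncv 0 j (c s)) :=
      mem_gsupp_trunc.2 ⟨by omega, ⟨s, hne⟩⟩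
    have hbad : i ∈ Bad :=
      Finset.mem_image.2 ⟨(ℓ, i), hfin.mem_toFinset.2 hmem, rfl⟩
    exact hclean i (by omega) (by omega) hbad
  set A : Fin r → Fin n → Polynomial F := fun s => truncv 0 a (c s) with hA
  set B : Fin r → Fin n → Polynomial F := fun s ℓ => c s ℓ - A s ℓ with hB
  have hABc : ∀ s, A s + B s = c s := by
    intro s; funext ℓ; simp [hB]
  have hBdvd : ∀ s ℓ, (X : Polynomial F) ^ (a + g + 1) ∣ B s ℓ := by
    intro s ℓ
    rw [Polynomial.X_pow_dvd_iff]
    intro d hd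
    have hA' : (A s ℓ).coeff d = if 0 ≤ d ∧ d ≤ a then (c s ℓ).coeff d else 0 := by
      simp [hA, truncv, coeff_truncp]
    simp only [hB, Polynomial.coeff_sub]
    by_cases hda : d ≤ a
    · rw [hA']; simp [hda]
    · rw [hA', if_neg (by omega), hgapc s ℓ d (by omega) (by omega), sub_zero]
  have hpc : ∀ s, p s = Matrix.vecMul (c s) H := by
    intro s
    rw [hcp s, Matrix.vecMul_vecMul, hH, Matrix.vecMul_one]
  set q : Fin r → Fin k → Polynomial F := fun s => Matrix.vecMul (A s) H with hq
  have hsplit : ∀ s, p s = q s + Matrix.vecMul (B s) H := by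
    intro s
    rw [hpc s, ← hABc s, Matrix.add_vecMul, hq]
  have hBHdvd : ∀ s l, (X : Polynomial F) ^ (a + g + 1) ∣ (Matrix.vecMul (B s) H) l := by
    intro s l
    rw [vecMul_apply']
    exact Finset.dvd_sum fun ℓ _ => (hBdvd s ℓ).mul_right _
  have hq0 : ∀ s l, (q s l).eval 0 = (p s l).eval 0 := by
    intro s l
    have h1 : ((Matrix.vecMul (B s) H) l).coeff 0 = 0 :=
      Polynomial.X_pow_dvd_iff.1 (hBHdvd s l) 0 (by omega)
    rw [hsplit s, Pi.add_apply, Polynomial.eval_add,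
      ← Polynomial.coeff_zero_eq_eval_zero ((Matrix.vecMul (B s) H) l), h1, add_zero]
  refine ⟨q, hq0, ?_⟩
  have hdegH : ∀ (ℓ : Fin n) (l : Fin k), (H ℓ l).degree ≤ (δ : WithBot ℕ) := by
    intro ℓ l
    refine Polynomial.degree_le_natDegree.trans ?_
    have hle := Finset.le_sup (f := (fun u : Fin n × Fin k => (H u.1 u.2).natDegree))
      (Finset.mem_univ (ℓ, l))
    rw [hδ]
    exact_mod_cast hle
  have hdegG : ∀ (l : Fin k) (ℓ : Fin n), (G l ℓ).degree ≤ (γ : WithBot ℕ) := by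
    intro l ℓ
    refine Polynomial.degree_le_natDegree.trans ?_
    have hle := Finset.le_sup (f := (fun u : Fin k × Fin n => (G u.1 u.2).natDegree))
      (Finset.mem_univ (l, ℓ))
    rw [hγ]
    exact_mod_cast hle
  have hdegA : ∀ s ℓ, (A s ℓ).degree ≤ (a : WithBot ℕ) := fun s ℓ => degree_truncp_le 0 a _
  have hdegq : ∀ s l, (q s l).degree ≤ ((a + δ : ℕ) : WithBot ℕ) := by
    intro s l
    simp only [hq]
    rw [vecMul_apply']
    refine (Polynomial.degree_sum_le _ _).trans (Finset.sup_le fun ℓ _ => ?_)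
    refine (Polynomial.degree_mul_le _ _).trans ?_
    rw [Nat.cast_add]
    exact add_le_add (hdegA s ℓ) (hdegH ℓ l)
  have hdegD : ∀ s ℓ, ((Matrix.vecMul (q s) G) ℓ).degree ≤ ((a + δ + γ : ℕ) : WithBot ℕ) := by
    intro s ℓ
    rw [vecMul_apply']
    refine (Polynomial.degree_sum_le _ _).trans (Finset.sup_le fun l _ => ?_)
    refine (Polynomial.degree_mul_le _ _).trans ?_
    rw [Nat.cast_add]
    exact add_le_add (hdegq s l) (hdegG l ℓ)
  have hcD : ∀ s, c s = Matrix.vecMul (q s) G + Matrix.vecMul (Matrix.vecMul (B s) H) G := by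
    intro s
    rw [hcp s, hsplit s, Matrix.add_vecMul]
  have hlow : ∀ s ℓ i, i ≤ a + g → ((Matrix.vecMul (q s) G) ℓ).coeff i = (c s ℓ).coeff i := by
    intro s ℓ i hi
    have h2 : ((Matrix.vecMul (Matrix.vecMul (B s) H) G) ℓ).coeff i = 0 := by
      have hdvd : (X : Polynomial F) ^ (a + g + 1) ∣
          (Matrix.vecMul (Matrix.vecMul (B s) H) G) ℓ := by
        rw [Matrix.vecMul_vecMul, vecMul_apply']
        exact Finset.dvd_sum fun ℓ' _ => (hBdvd s ℓ').mul_right _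
      exact Polynomial.X_pow_dvd_iff.1 hdvd i (by omega)
    rw [congrFun (hcD s) ℓ, Pi.add_apply, Polynomial.coeff_add, h2, add_zero]
  rintro ⟨ℓ, i⟩ ⟨s, hne⟩
  simp only at hne
  have hi1 : i ≤ a + δ + γ := by
    by_contra hgt
    exact hne (Polynomial.coeff_eq_zero_of_degree_lt ((hdegD s ℓ).trans_lt
      (by exact_mod_cast (by omega : a + δ + γ < i))))
  have hib : i ≤ a + g := by omega
  have hcne : (c s ℓ).coeff i ≠ 0 := by rw [← hlow s ℓ i hib]; exact hne
  have hia : i ≤ a := by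
    by_contra hgt
    exact hcne (hgapc s ℓ i (by omega) (by omega))
  exact mem_gsupp_trunc.2 ⟨by omega, ⟨s, hcne⟩⟩

end Aux

end ConvCode

open ConvCode
/-- for a noncatastrophic code, the `r`-generalized column distance is the
minimum of `|supp{p_1 G, …, p_r G}|` over `p_1, …, p_r ∈ F[x]^k` whose evaluations at `0`
are linearly independent. -/
theorem gcdLim_eq_untruncated_min {F : Type*} [Field F] [Fintype F] {n k : ℕ}
    (C : Submodule (Polynomial F) (Fin n → Polynomial F))
    (hk : 1 ≤ k) (hkn : k ≤ n) (hNC : Noncatastrophic C k)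
    (G : Matrix (Fin k) (Fin n) (Polynomial F)) (hG : IsGenMat C G)
    (r : ℕ) (hr : 1 ≤ r) (hrk : r ≤ k) :
    gcdLim G r = sInf { m | ∃ p : Fin r → Fin k → Polynomial F,
      LinearIndependent F (fun s => fun l => (p s l).eval 0) ∧
      m = (gsupp fun s => Matrix.vecMul (p s) G).ncard } := by
  classical
  obtain ⟨G', hG', ⟨H', hH'⟩, -⟩ := hNC
  obtain ⟨H, hH⟩ := exists_rightInv hG hG' hH'
  set T := { m | ∃ p : Fin r → Fin k → Polynomial F,
      LinearIndependent F (fun s => fun l => (p s l).eval 0) ∧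
      m = (gsupp fun s => Matrix.vecMul (p s) G).ncard } with hT
  have hstdLI : LinearIndependent F (fun s : Fin r => fun l : Fin k =>
      ((if l = Fin.castLE hrk s then (1 : Polynomial F) else 0).eval 0)) := li_std hrk
  have hTne : T.Nonempty :=
    ⟨_, fun s l => if l = Fin.castLE hrk s then (1 : Polynomial F) else 0, hstdLI, rfl⟩
  have hle : ∀ j : ℕ, gcdJ G r j ≤ sInf T := by
    intro j
    obtain ⟨p, hpLI, hMeq⟩ := Nat.sInf_mem hTne
    unfold gcdJ
    refine le_trans (Nat.sInf_le ⟨p, hpLI, rfl⟩) ?_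
    rw [hMeq]
    exact Set.ncard_le_ncard (gsupp_trunc_subset _) (gsupp_finite _)
  set δ := Finset.univ.sup (fun u : Fin n × Fin k => (H u.1 u.2).natDegree) with hδ
  set γ := Finset.univ.sup (fun u : Fin k × Fin n => (G u.1 u.2).natDegree) with hγ
  have hge : ∀ j : ℕ, sInf T * (δ + γ + 1) ≤ j → sInf T ≤ gcdJ G r j := by
    intro j hj
    unfold gcdJ
    refine le_csInf
      ⟨_, fun s l => if l = Fin.castLE hrk s then (1 : Polynomial F) else 0, hstdLI, rfl⟩ ?_
    rintro m ⟨p, hpLI, rfl⟩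
    by_contra hlt
    push_neg at hlt
    obtain ⟨q, hq0, hsub⟩ := key G H hH p (fun s => Matrix.vecMul (p s) G)
      (fun s => rfl) (sInf T) j hj hlt
    have hqLI : LinearIndependent F (fun s => fun l => (q s l).eval 0) := by
      have e : (fun s => fun l => (q s l).eval 0) = (fun s => fun l => (p s l).eval 0) := by
        funext s l; exact hq0 s l
      rw [e]; exact hpLI
    have h1 : sInf T ≤ (gsupp fun s => Matrix.vecMul (q s) G).ncard :=
      Nat.sInf_le ⟨q, hqLI, rfl⟩
    have h2 : (gsupp fun s => Matrix.vecMul (q s) G).ncard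
        ≤ (gsupp fun s => truncv 0 j (Matrix.vecMul (p s) G)).ncard :=
      Set.ncard_le_ncard hsub (gsupp_finite _)
    omega
  have hev : (fun j => gcdJ G r j) =ᶠ[Filter.atTop] (fun _ => sInf T) :=
    Filter.eventually_atTop.2 ⟨sInf T * (δ + γ + 1), fun j hj =>
      le_antisymm (hle j) (hge j hj)⟩
  unfold gcdLim
  rw [Filter.limsup_congr hev, Filter.limsup_const]
end

section
/- Let C be a noncatastrophic convolutional code in F[x]^n of rank k. Then d_r(C) ≤ d^r(C) for every 1 ≤ r ≤ k, i.e., the r-th generalized weight is at most the r-generalized column distance. Moreover, d_1(C) = d^1(C) = d_free(C). -/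
open Polynomial

set_option linter.unusedSectionVars false
set_option maxHeartbeats 1000000

namespace ConvAux
open ConvCode

variable {F : Type*} [Field F] [Fintype F] {n k : ℕ}

lemma coeff_trunc0 (j i : ℕ) (p : Polynomial F) :
    (truncp 0 j p).coeff i = if i ≤ j then p.coeff i else 0 := by
  unfold truncp
  rw [Polynomial.finset_sum_coeff]
  simp only [Polynomial.coeff_C_mul, Polynomial.coeff_X_pow, mul_ite, mul_one, mul_zero]
  rw [Finset.sum_ite_eq (Finset.Icc 0 j) i fun m => p.coeff m]
  simp [Finset.mem_Icc]

lemma natDegree_trunc0_le (j : ℕ) (p : Polynomial F) : (truncp 0 j p).natDegree ≤ j := by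
  apply Polynomial.natDegree_sum_le_of_forall_le
  intro i hi
  refine le_trans (Polynomial.natDegree_mul_le) ?_
  simpa [Polynomial.natDegree_C, Polynomial.natDegree_X_pow] using (Finset.mem_Icc.mp hi).2

lemma support_X_pow_mul_card (m : ℕ) (p : Polynomial F) :
    (X ^ m * p).support.card = p.support.card := by
  have h : (X ^ m * p).support = p.support.image (· + m) := by
    ext i
    simp only [Polynomial.mem_support_iff, Finset.mem_image]
    constructor
    · intro h
      rcases le_or_gt m i with h' | h'
      · refine ⟨i - m, ?_, by omega⟩
        rw [← Polynomial.coeff_X_pow_mul p m (i - m)]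
        rwa [Nat.sub_add_cancel h']
      · exact absurd (Polynomial.X_pow_dvd_iff.mp (dvd_mul_right _ _) i h') h
    · rintro ⟨a, ha, rfl⟩
      rwa [Polynomial.coeff_X_pow_mul]
  rw [h, Finset.card_image_of_injective _ (add_left_injective m)]

lemma vecMul_apply' {k' : ℕ} (q : Fin k' → Polynomial F) (M : Matrix (Fin k') (Fin n) (Polynomial F))
    (ℓ : Fin n) : Matrix.vecMul q M ℓ = ∑ l, q l * M l ℓ := by
  simp [Matrix.vecMul, dotProduct]

lemma vecMul_eq_sum' {k' : ℕ} (q : Fin k' → Polynomial F) (M : Matrix (Fin k') (Fin n) (Polynomial F)) :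
    Matrix.vecMul q M = ∑ l, q l • M l := by
  ext ℓ; simp [Matrix.vecMul, dotProduct, Finset.sum_apply]

/-- membership of `vecMul q G` in the span of the rows. -/
lemma vecMul_mem (C : Submodule (Polynomial F) (Fin n → Polynomial F))
    (G : Matrix (Fin k) (Fin n) (Polynomial F)) (hG : IsGenMat C G)
    (q : Fin k → Polynomial F) : Matrix.vecMul q G ∈ C := by
  rw [← hG.2, vecMul_eq_sum']
  exact Submodule.sum_mem _ fun i _ => Submodule.smul_mem _ _ (Submodule.subset_span ⟨i, rfl⟩)

lemma exists_vecMul (C : Submodule (Polynomial F) (Fin n → Polynomial F))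
    (G : Matrix (Fin k) (Fin n) (Polynomial F)) (hG : IsGenMat C G)
    {c : Fin n → Polynomial F} (hc : c ∈ C) : ∃ q, c = Matrix.vecMul q G := by
  rw [← hG.2] at hc
  obtain ⟨q, hq⟩ := (Submodule.mem_span_range_iff_exists_fun _).mp hc
  exact ⟨q, by rw [vecMul_eq_sum', hq]⟩

/-- finiteness of gsupp -/
lemma gsupp_finite {r : ℕ} (d : Fin r → Fin n → Polynomial F) : (gsupp d).Finite := by
  classical
  rcases Nat.eq_zero_or_pos r with hr | hr
  · subst hr
    have : gsupp d = ∅ := by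
      ext q; simp only [gsupp, Set.mem_setOf_eq, Set.mem_empty_iff_false, iff_false]
      rintro ⟨s, -⟩; exact absurd s.2 (by omega)
    simp [this]
  set N := Finset.univ.sup (fun q : Fin r × Fin n => (d q.1 q.2).natDegree) with hN
  apply Set.Finite.subset (Set.finite_univ.prod (Set.finite_Iic N))
  rintro ⟨ℓ, i⟩ ⟨s, hs⟩
  refine ⟨trivial, ?_⟩
  exact le_trans (Polynomial.le_natDegree_of_ne_zero hs)
    (Finset.le_sup (f := fun q : Fin r × Fin n => (d q.1 q.2).natDegree) (Finset.mem_univ (s, ℓ)))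

lemma ncard_gsupp_single (c : Fin n → Polynomial F) :
    (gsupp (fun _ : Fin 1 => c)).ncard = wtv c := by
  classical
  have h : gsupp (fun _ : Fin 1 => c)
      = ↑(Finset.univ.biUnion fun ℓ : Fin n => ((c ℓ).support.image fun i => (ℓ, i))) := by
    ext ⟨ℓ, i⟩
    simp only [gsupp, Set.mem_setOf_eq, Finset.coe_biUnion, Set.mem_iUnion, Finset.mem_coe,
      Finset.mem_image, Finset.mem_univ, Polynomial.mem_support_iff, exists_true_left]
    constructor
    · rintro ⟨-, hs⟩; exact ⟨ℓ, ⟨i, hs, rfl⟩⟩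
    · rintro ⟨ℓ', i', hi', h'⟩
      obtain ⟨rfl, rfl⟩ : ℓ' = ℓ ∧ i' = i := Prod.mk_inj.mp h'
      exact ⟨0, hi'⟩
  rw [h, Set.ncard_coe_finset, Finset.card_biUnion, wtv]
  · exact Finset.sum_congr rfl fun ℓ _ =>
      Finset.card_image_of_injective _ (fun a b hab => (Prod.mk_inj.mp hab).2)
  · intro ℓ _ ℓ' _ hne
    simp only [Finset.disjoint_left, Finset.mem_image]
    rintro ⟨a, b⟩ ⟨i1, -, h1⟩ ⟨i2, -, h2⟩
    exact hne ((Prod.mk_inj.mp h1).1.trans (Prod.mk_inj.mp h2).1.symm)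

/-- trunc supports grow with j -/
lemma gsupp_trunc_mono {r : ℕ} (d : Fin r → Fin n → Polynomial F) {j j' : ℕ} (hj : j ≤ j') :
    gsupp (fun s => truncv 0 j (d s)) ⊆ gsupp (fun s => truncv 0 j' (d s)) := by
  rintro ⟨ℓ, i⟩ ⟨s, hs⟩
  refine ⟨s, ?_⟩
  simp only [truncv, coeff_trunc0] at hs ⊢
  split at hs
  · next h => rw [if_pos (le_trans h hj)]; exact hs
  · exact absurd rfl hs

lemma gsupp_trunc_subset {r : ℕ} (d : Fin r → Fin n → Polynomial F) (j : ℕ) :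
    gsupp (fun s => truncv 0 j (d s)) ⊆ gsupp d := by
  rintro ⟨ℓ, i⟩ ⟨s, hs⟩
  refine ⟨s, ?_⟩
  simp only [truncv, coeff_trunc0] at hs
  split at hs
  · exact hs
  · exact absurd rfl hs

/-- low-order coefficient vanishing is preserved by vecMul -/
lemma coeff_vecMul_eq_zero {k' n' : ℕ} (v : Fin k' → Polynomial F)
    (M : Matrix (Fin k') (Fin n') (Polynomial F)) (m : ℕ)
    (hv : ∀ ℓ i, i ≤ m → (v ℓ).coeff i = 0) :
    ∀ l i, i ≤ m → ((Matrix.vecMul v M) l).coeff i = 0 := by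
  intro l i hi
  rw [show (Matrix.vecMul v M) l = ∑ ℓ, v ℓ * M ℓ l from by simp [Matrix.vecMul, dotProduct]]
  rw [Polynomial.finset_sum_coeff]
  refine Finset.sum_eq_zero fun ℓ _ => ?_
  rw [Polynomial.coeff_mul]
  refine Finset.sum_eq_zero fun x hx => ?_
  have hx1 : x.1 ≤ i := by
    have := Finset.HasAntidiagonal.mem_antidiagonal.mp hx; omega
  rw [hv ℓ x.1 (le_trans hx1 hi), zero_mul]

/-- entrywise degree bound of a matrix -/
noncomputable def dmax {k' n' : ℕ} (M : Matrix (Fin k') (Fin n') (Polynomial F)) : ℕ :=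
  Finset.univ.sup fun q : Fin k' × Fin n' => (M q.1 q.2).natDegree

lemma natDegree_vecMul_le {k' n' : ℕ} (v : Fin k' → Polynomial F)
    (M : Matrix (Fin k') (Fin n') (Polynomial F)) (a : ℕ)
    (hv : ∀ ℓ, (v ℓ).natDegree ≤ a) (l : Fin n') :
    ((Matrix.vecMul v M) l).natDegree ≤ a + dmax M := by
  rw [show (Matrix.vecMul v M) l = ∑ ℓ, v ℓ * M ℓ l from by simp [Matrix.vecMul, dotProduct]]
  apply Polynomial.natDegree_sum_le_of_forall_le
  intro ℓ _
  refine le_trans Polynomial.natDegree_mul_le (add_le_add (hv ℓ) ?_)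
  exact Finset.le_sup (f := fun q : Fin k' × Fin n' => (M q.1 q.2).natDegree) (Finset.mem_univ (ℓ, l))

/-- linear independence over F of constant terms implies linear independence over F[x] -/
lemma linIndep_of_eval0 {r : ℕ} (p : Fin r → Fin k → Polynomial F)
    (h : LinearIndependent F fun s => fun l => (p s l).eval 0) :
    LinearIndependent (Polynomial F) p := by
  classical
  rw [Fintype.linearIndependent_iff]
  intro g hg
  by_contra hne
  push_neg at hne
  obtain ⟨s₀, hs₀⟩ := hne
  have hSne : {i | ∃ s, (g s).coeff i ≠ 0}.Nonempty := by
    obtain ⟨i, hi⟩ : ∃ i, (g s₀).coeff i ≠ 0 := by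
      by_contra h'
      push_neg at h'
      exact hs₀ (Polynomial.ext fun i => by simp [h' i])
    exact ⟨i, s₀, hi⟩
  set m := sInf {i | ∃ s, (g s).coeff i ≠ 0} with hm
  obtain ⟨s₁, hs₁⟩ := Nat.sInf_mem hSne
  have hlow : ∀ s, ∀ d < m, (g s).coeff d = 0 := by
    intro s d hd
    by_contra h'
    have hmem : d ∈ {i | ∃ s, (g s).coeff i ≠ 0} := ⟨s, h'⟩
    have := Nat.sInf_le hmem
    omega
  choose b hb using fun s => (Polynomial.X_pow_dvd_iff.mpr (hlow s))
  have hco : ∀ l, ∑ s, (b s) * (p s l) = 0 := by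
    intro l
    have h1 : ∑ s, g s * p s l = 0 := by
      have := congrFun hg l
      simpa [Finset.sum_apply] using this
    have h2 : X ^ m * (∑ s, b s * p s l) = 0 := by
      rw [Finset.mul_sum, ← h1]
      refine Finset.sum_congr rfl fun s _ => ?_
      rw [hb s]; ring
    exact (mul_eq_zero.mp h2).resolve_left (pow_ne_zero _ Polynomial.X_ne_zero)
  have hz := Fintype.linearIndependent_iff.mp h (fun s => (b s).eval 0) ?_ s₁
  · apply hs₁
    rw [hb s₁]
    have : (X ^ m * b s₁).coeff (0 + m) = (b s₁).coeff 0 := Polynomial.coeff_X_pow_mul _ _ _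
    rw [zero_add] at this
    rw [this, Polynomial.coeff_zero_eq_eval_zero, hz]
  · funext l
    have := hco l
    have h3 : Polynomial.eval 0 (∑ s, b s * p s l) = 0 := by rw [this]; simp
    rw [Polynomial.eval_finset_sum] at h3
    simp only [Polynomial.eval_mul] at h3
    simpa [Finset.sum_apply] using h3

/-- kernel of vecMul by a matrix with linearly independent rows -/
lemma vecMulLinear_ker (G : Matrix (Fin k) (Fin n) (Polynomial F))
    (hG : LinearIndependent (Polynomial F) (fun i => G i)) :
    LinearMap.ker G.vecMulLinear = ⊥ := by
  rw [LinearMap.ker_eq_bot']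
  intro q hq
  have hq' : ∑ l, q l • G l = 0 := by
    rw [← vecMul_eq_sum']
    exact hq
  funext l
  exact Fintype.linearIndependent_iff.mp hG q hq' l

lemma rank_span_ge (C : Submodule (Polynomial F) (Fin n → Polynomial F))
    (G : Matrix (Fin k) (Fin n) (Polynomial F)) (hG : IsGenMat C G)
    {r : ℕ} (p : Fin r → Fin k → Polynomial F)
    (hp : LinearIndependent (Polynomial F) p) :
    (r : Cardinal) ≤ Module.rank (Polynomial F)
      ↥(Submodule.span (Polynomial F) (Set.range fun s => Matrix.vecMul (p s) G)) := by
  have h2 : LinearIndependent (Polynomial F) (fun s => Matrix.vecMul (p s) G) := by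
    have := hp.map' _ (vecMulLinear_ker G hG.1)
    exact this
  set S := Submodule.span (Polynomial F) (Set.range fun s => Matrix.vecMul (p s) G)
  have h4 : LinearIndependent (Polynomial F)
      (fun s => (⟨Matrix.vecMul (p s) G, Submodule.subset_span ⟨s, rfl⟩⟩ : S)) := by
    apply LinearIndependent.of_comp S.subtype
    exact h2
  have h5 := h4.cardinal_lift_le_rank
  simpa using h5

/-- the standard choice of `p` -/
noncomputable def p0 {r : ℕ} (hrk : r ≤ k) : Fin r → Fin k → Polynomial F :=
  fun s l => if Fin.castLE hrk s = l then 1 else 0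

lemma p0_eval {r : ℕ} (hrk : r ≤ k) :
    LinearIndependent F (fun s => fun l => ((p0 (F := F) hrk s l).eval 0)) := by
  classical
  have hfun : (fun s => fun l => ((p0 (F := F) hrk s l).eval 0))
      = fun s l => if Fin.castLE hrk s = l then (1 : F) else 0 := by
    funext s l; unfold p0; split <;> simp
  rw [hfun, Fintype.linearIndependent_iff]
  intro g hg s'
  have h0 := congrFun hg (Fin.castLE hrk s')
  simp only [Finset.sum_apply, Pi.smul_apply, smul_eq_mul, mul_ite, mul_one, mul_zero,
    (Fin.castLE_injective hrk).eq_iff, Finset.sum_ite_eq', Finset.mem_univ, if_true,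
    Pi.zero_apply] at h0
  exact h0

lemma gcdJ_le (G : Matrix (Fin k) (Fin n) (Polynomial F)) {r j : ℕ}
    {p : Fin r → Fin k → Polynomial F}
    (hp : LinearIndependent F fun s => fun l => (p s l).eval 0) :
    gcdJ G r j ≤ (gsupp fun s => truncv 0 j (Matrix.vecMul (p s) G)).ncard :=
  Nat.sInf_le ⟨p, hp, rfl⟩

lemma gcdJ_bound (G : Matrix (Fin k) (Fin n) (Polynomial F)) {r : ℕ} (hrk : r ≤ k) (j : ℕ) :
    gcdJ G r j ≤ (gsupp fun s => Matrix.vecMul (p0 (F := F) hrk s) G).ncard :=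
  le_trans (gcdJ_le G (p0_eval hrk))
    (Set.ncard_le_ncard (gsupp_trunc_subset _ j) (gsupp_finite _))

lemma gcdJ_eq (G : Matrix (Fin k) (Fin n) (Polynomial F)) {r : ℕ} (hrk : r ≤ k) (j : ℕ) :
    ∃ p : Fin r → Fin k → Polynomial F,
      LinearIndependent F (fun s => fun l => (p s l).eval 0) ∧
      gcdJ G r j = (gsupp fun s => truncv 0 j (Matrix.vecMul (p s) G)).ncard := by
  have hne : { m | ∃ p : Fin r → Fin k → Polynomial F,
      LinearIndependent F (fun s => fun l => (p s l).eval 0) ∧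
      m = (gsupp fun s => truncv 0 j (Matrix.vecMul (p s) G)).ncard }.Nonempty :=
    ⟨_, p0 hrk, p0_eval hrk, rfl⟩
  obtain ⟨p, hp, hval⟩ := Nat.sInf_mem hne
  exact ⟨p, hp, hval⟩

lemma gcdJ_mono (G : Matrix (Fin k) (Fin n) (Polynomial F)) {r : ℕ} (hrk : r ≤ k)
    {j j' : ℕ} (h : j ≤ j') : gcdJ G r j ≤ gcdJ G r j' := by
  obtain ⟨p, hp, hval⟩ := gcdJ_eq G hrk j'
  calc gcdJ G r j ≤ (gsupp fun s => truncv 0 j (Matrix.vecMul (p s) G)).ncard := gcdJ_le G hp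
    _ ≤ (gsupp fun s => truncv 0 j' (Matrix.vecMul (p s) G)).ncard :=
        Set.ncard_le_ncard (gsupp_trunc_mono _ h)
          (Set.Finite.subset (gsupp_finite _) (gsupp_trunc_subset _ j'))
    _ = gcdJ G r j' := hval.symm

lemma gcdJ_le_gcdLim (G : Matrix (Fin k) (Fin n) (Polynomial F)) {r : ℕ} (hrk : r ≤ k)
    (j : ℕ) : gcdJ G r j ≤ gcdLim G r := by
  unfold gcdLim
  rw [Filter.limsup_eq]
  refine le_csInf ⟨_, Filter.Eventually.of_forall (gcdJ_bound G hrk)⟩ ?_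
  rintro a ha
  obtain ⟨N, hN⟩ := Filter.eventually_atTop.mp ha
  exact le_trans (gcdJ_mono G hrk (le_max_left j N)) (hN (max j N) (le_max_right j N))

lemma gcdLim_le (G : Matrix (Fin k) (Fin n) (Polynomial F)) {r m : ℕ}
    (h : ∀ j, gcdJ G r j ≤ m) : gcdLim G r ≤ m := by
  unfold gcdLim
  rw [Filter.limsup_eq]
  exact csInf_le (OrderBot.bddBelow _) (Filter.Eventually.of_forall h)

lemma mul_right_cancel_rows (G₀ : Matrix (Fin k) (Fin n) (Polynomial F))
    (h : LinearIndependent (Polynomial F) fun i => G₀ i)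
    {M N : Matrix (Fin k) (Fin k) (Polynomial F)} (hMN : M * G₀ = N * G₀) : M = N := by
  apply Matrix.ext; intro i l
  have h1 : ∑ l', (M i l' - N i l') • G₀ l' = 0 := by
    have h0 : Matrix.vecMul (M i) G₀ = Matrix.vecMul (N i) G₀ := by
      funext ℓ
      have := congrFun (congrFun hMN i) ℓ
      rw [vecMul_apply', vecMul_apply']
      simpa [Matrix.mul_apply] using this
    rw [vecMul_eq_sum', vecMul_eq_sum'] at h0
    simp [sub_smul, Finset.sum_sub_distrib, h0]
  exact sub_eq_zero.mp (Fintype.linearIndependent_iff.mp h _ h1 l)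

lemma transfer_right_inverse (C : Submodule (Polynomial F) (Fin n → Polynomial F))
    (G G₀ : Matrix (Fin k) (Fin n) (Polynomial F))
    (hG : IsGenMat C G) (hG₀ : IsGenMat C G₀)
    (H₀ : Matrix (Fin n) (Fin k) (Polynomial F)) (hH₀ : G₀ * H₀ = 1) :
    ∃ H : Matrix (Fin n) (Fin k) (Polynomial F), G * H = 1 := by
  have hmemG : ∀ i, G i ∈ C := by
    intro i; rw [← hG.2]; exact Submodule.subset_span ⟨i, rfl⟩
  have hmemG₀ : ∀ i, G₀ i ∈ C := by
    intro i; rw [← hG₀.2]; exact Submodule.subset_span ⟨i, rfl⟩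
  choose U hU using fun i => exists_vecMul C G₀ hG₀ (hmemG i)
  choose V hV using fun i => exists_vecMul C G hG (hmemG₀ i)
  have hUG : (Matrix.of U) * G₀ = G := by
    ext i ℓ
    rw [Matrix.mul_apply, show G i ℓ = Matrix.vecMul (U i) G₀ ℓ from by rw [← hU i],
      vecMul_apply']
    rfl
  have hVG : (Matrix.of V) * G = G₀ := by
    ext i ℓ
    rw [Matrix.mul_apply, show G₀ i ℓ = Matrix.vecMul (V i) G ℓ from by rw [← hV i],
      vecMul_apply']
    rfl
  have hVU : (Matrix.of V) * (Matrix.of U) = 1 := by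
    apply mul_right_cancel_rows G₀ hG₀.1
    rw [Matrix.mul_assoc, hUG, hVG, Matrix.one_mul]
  have hUV : (Matrix.of U) * (Matrix.of V) = 1 := mul_eq_one_comm.mp hVU
  refine ⟨H₀ * Matrix.of V, ?_⟩
  rw [← hUG, Matrix.mul_assoc, ← Matrix.mul_assoc G₀, hH₀, Matrix.one_mul, hUV]

/-- THE CORE GAP LEMMA -/
lemma trunc_eq_vecMul (G : Matrix (Fin k) (Fin n) (Polynomial F))
    (H : Matrix (Fin n) (Fin k) (Polynomial F))
    (hGH : G * H = 1) (p : Fin k → Polynomial F) (a μ : ℕ)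
    (hμ : dmax H + dmax G ≤ μ)
    (hgap : ∀ ℓ i, a + 1 ≤ i → i ≤ a + μ → ((Matrix.vecMul p G) ℓ).coeff i = 0) :
    truncv 0 a (Matrix.vecMul p G)
      = Matrix.vecMul (Matrix.vecMul (truncv 0 a (Matrix.vecMul p G)) H) G := by
  set c := Matrix.vecMul p G with hc
  set c' := truncv 0 a c with hc'
  have hcoeff' : ∀ ℓ i, (c' ℓ).coeff i = if i ≤ a then (c ℓ).coeff i else 0 :=
    fun ℓ i => coeff_trunc0 a i (c ℓ)
  set c'' := c - c' with hc''
  have hlow : ∀ ℓ i, i ≤ a + μ → (c'' ℓ).coeff i = 0 := by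
    intro ℓ i hi
    simp only [hc'', Pi.sub_apply, Polynomial.coeff_sub, hcoeff']
    rcases le_or_gt i a with h | h
    · rw [if_pos h, sub_self]
    · rw [if_neg (by omega), hgap ℓ i (by omega) hi, sub_zero]
  have hΦc : Matrix.vecMul (Matrix.vecMul c H) G = c := by
    rw [hc, show Matrix.vecMul (Matrix.vecMul p G) H = p from by
      rw [Matrix.vecMul_vecMul, hGH, Matrix.vecMul_one]]
  have hsub : Matrix.vecMul (Matrix.vecMul c' H) G
      = c - Matrix.vecMul (Matrix.vecMul c'' H) G := by
    have h4 : c' = c - c'' := by rw [hc'', sub_sub_cancel]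
    rw [h4, Matrix.sub_vecMul, Matrix.sub_vecMul, hΦc]
  have hlow2 : ∀ l i, i ≤ a + μ → ((Matrix.vecMul (Matrix.vecMul c'' H) G) l).coeff i = 0 :=
    fun l i hi => coeff_vecMul_eq_zero _ G (a + μ)
      (coeff_vecMul_eq_zero c'' H (a + μ) hlow) l i hi
  have hdeg : ∀ l, ((Matrix.vecMul (Matrix.vecMul c' H) G) l).natDegree ≤ a + μ := by
    intro l
    have h1 : ∀ ℓ, (c' ℓ).natDegree ≤ a := fun ℓ => natDegree_trunc0_le a (c ℓ)
    have h2 : ∀ l', ((Matrix.vecMul c' H) l').natDegree ≤ a + dmax H :=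
      natDegree_vecMul_le c' H a h1
    have h3 := natDegree_vecMul_le _ G (a + dmax H) h2 l
    omega
  funext ℓ
  apply Polynomial.ext
  intro i
  rcases le_or_gt i a with h | h
  · rw [hcoeff' ℓ i, if_pos h, congrFun hsub ℓ, Pi.sub_apply, Polynomial.coeff_sub,
      hlow2 ℓ i (by omega), sub_zero]
  · rcases le_or_gt i (a + μ) with h2 | h2
    · rw [hcoeff' ℓ i, if_neg (by omega), congrFun hsub ℓ, Pi.sub_apply, Polynomial.coeff_sub,
        hlow2 ℓ i h2, sub_zero, hgap ℓ i (by omega) h2]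
    · rw [hcoeff' ℓ i, if_neg (by omega)]
      exact (Polynomial.coeff_eq_zero_of_natDegree_lt (lt_of_le_of_lt (hdeg ℓ) h2)).symm

lemma eval0_vecMul_trunc (G : Matrix (Fin k) (Fin n) (Polynomial F))
    (H : Matrix (Fin n) (Fin k) (Polynomial F)) (hGH : G * H = 1)
    (p : Fin k → Polynomial F) (a : ℕ) (l : Fin k) :
    ((Matrix.vecMul (truncv 0 a (Matrix.vecMul p G)) H) l).eval 0 = (p l).eval 0 := by
  have h1 : ∀ v : Fin n → Polynomial F,
      ((Matrix.vecMul v H) l).eval 0 = ∑ ℓ, (v ℓ).eval 0 * ((H ℓ l).eval 0) := by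
    intro v
    rw [show (Matrix.vecMul v H) l = ∑ ℓ, v ℓ * H ℓ l from by
      simp [Matrix.vecMul, dotProduct], Polynomial.eval_finset_sum]
    simp
  have h2 : ∀ ℓ, ((truncv 0 a (Matrix.vecMul p G)) ℓ).eval 0
      = ((Matrix.vecMul p G) ℓ).eval 0 := by
    intro ℓ
    rw [← Polynomial.coeff_zero_eq_eval_zero, ← Polynomial.coeff_zero_eq_eval_zero]
    show (truncp 0 a ((Matrix.vecMul p G) ℓ)).coeff 0 = _
    rw [coeff_trunc0, if_pos (Nat.zero_le a)]
  calc ((Matrix.vecMul (truncv 0 a (Matrix.vecMul p G)) H) l).eval 0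
      = ∑ ℓ, ((truncv 0 a (Matrix.vecMul p G)) ℓ).eval 0 * (H ℓ l).eval 0 := h1 _
    _ = ∑ ℓ, ((Matrix.vecMul p G) ℓ).eval 0 * (H ℓ l).eval 0 :=
        Finset.sum_congr rfl fun ℓ _ => by rw [h2 ℓ]
    _ = ((Matrix.vecMul (Matrix.vecMul p G) H) l).eval 0 := (h1 _).symm
    _ = (p l).eval 0 := by rw [Matrix.vecMul_vecMul, hGH, Matrix.vecMul_one]

/-- pigeonhole: a long zero window in a small support -/
lemma exists_gap (T : Set (Fin n × ℕ)) (hT : T.Finite) (B μ : ℕ) (hB : T.ncard ≤ B) :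
    ∃ a : ℕ, a + μ ≤ (B + 1) * (μ + 1) ∧
      ∀ i, a + 1 ≤ i → i ≤ a + μ → ∀ ℓ, (ℓ, i) ∉ T := by
  classical
  by_contra hcon
  push_neg at hcon
  have hwin : ∀ t : Fin (B + 1), (t : ℕ) * (μ + 1) + μ ≤ (B + 1) * (μ + 1) := by
    intro t
    have h1 : (t : ℕ) ≤ B := Nat.lt_succ_iff.mp t.2
    have h2 := Nat.mul_le_mul_right (μ + 1) h1
    have h3 : (B + 1) * (μ + 1) = B * (μ + 1) + (μ + 1) := by ring
    omega
  have hch : ∀ t : Fin (B + 1), ∃ i, (t : ℕ) * (μ + 1) + 1 ≤ i ∧ i ≤ (t : ℕ) * (μ + 1) + μ ∧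
      ∃ ℓ, (ℓ, i) ∈ T := by
    intro t
    obtain ⟨i, h1, h2, ℓ, h3⟩ := hcon ((t : ℕ) * (μ + 1)) (hwin t)
    exact ⟨i, h1, h2, ℓ, h3⟩
  choose f hf1 hf2 hf3 using hch
  have key : ∀ t t' : Fin (B + 1), (t : ℕ) < (t' : ℕ) → f t ≠ f t' := by
    intro t t' hlt heq
    have h1 := hf2 t
    have h2 := hf1 t'
    rw [heq] at h1
    have hm : ((t : ℕ) + 1) * (μ + 1) ≤ (t' : ℕ) * (μ + 1) := Nat.mul_le_mul_right _ hlt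
    have hexp : ((t : ℕ) + 1) * (μ + 1) = (t : ℕ) * (μ + 1) + (μ + 1) := by ring
    omega
  have hinj : Function.Injective f := by
    intro t t' h
    rcases lt_trichotomy ((t : ℕ)) ((t' : ℕ)) with hlt | heq | hgt
    · exact absurd h (key t t' hlt)
    · exact Fin.ext heq
    · exact absurd h.symm (key t' t hgt)
  have hsub : ∀ t ∈ (Finset.univ : Finset (Fin (B + 1))), f t ∈ hT.toFinset.image Prod.snd := by
    intro t _
    obtain ⟨ℓ, hℓ⟩ := hf3 t
    exact Finset.mem_image.mpr ⟨(ℓ, f t), hT.mem_toFinset.mpr hℓ, rfl⟩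
  have hcard := Finset.card_le_card_of_injOn f hsub hinj.injOn
  rw [Finset.card_univ, Fintype.card_fin] at hcard
  have h5 : (hT.toFinset.image Prod.snd).card ≤ T.ncard := by
    rw [Set.ncard_eq_toFinset_card T hT]
    exact Finset.card_image_le
  omega

lemma d0_ne_zero (d : Fin 1 → Fin n → Polynomial F)
    (hrank : ((1 : ℕ) : Cardinal) ≤ Module.rank (Polynomial F)
      ↥(Submodule.span (Polynomial F) (Set.range d))) : d 0 ≠ 0 := by
  intro h0
  have hd : d = fun _ => (0 : Fin n → Polynomial F) :=
    funext fun s => by rw [Subsingleton.elim s 0, h0]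
  rw [hd, Set.range_const, Submodule.span_zero_singleton, rank_bot] at hrank
  simp at hrank

end ConvAux

open ConvCode
/-- for a noncatastrophic code, `d_r(C) ≤ d^r(C)` for `1 ≤ r ≤ k`, and
`d_1(C) = d^1(C) = d_free(C)`. -/
theorem genWt_le_gcdLim {F : Type*} [Field F] [Fintype F] {n k : ℕ}
    (C : Submodule (Polynomial F) (Fin n → Polynomial F))
    (hk : 1 ≤ k) (hkn : k ≤ n) (hNC : Noncatastrophic C k)
    (G : Matrix (Fin k) (Fin n) (Polynomial F)) (hG : IsGenMat C G) :
    (∀ r : ℕ, 1 ≤ r → r ≤ k → genWt C r ≤ gcdLim G r) ∧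
    genWt C 1 = gcdLim G 1 ∧ gcdLim G 1 = dfree C := by
  classical
  obtain ⟨G₀, hG₀, ⟨H₀, hH₀⟩, -⟩ := hNC
  obtain ⟨H, hGH⟩ := ConvAux.transfer_right_inverse C G G₀ hG hG₀ H₀ hH₀
  have main : ∀ r : ℕ, 1 ≤ r → r ≤ k → genWt C r ≤ gcdLim G r := by
    intro r hr hrk
    set μ := ConvAux.dmax H + ConvAux.dmax G + 1 with hμdef
    set B := (gsupp fun s => Matrix.vecMul (ConvAux.p0 (F := F) hrk s) G).ncard with hBdef
    set j := (B + 1) * (μ + 1) with hjdef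
    obtain ⟨p, hp, hval⟩ := ConvAux.gcdJ_eq G hrk j
    set T := (gsupp fun s => truncv 0 j (Matrix.vecMul (p s) G)) with hTdef
    have hTfin : T.Finite := ConvAux.gsupp_finite _
    have hTcard : T.ncard ≤ B := by
      rw [← hval]; exact ConvAux.gcdJ_bound G hrk j
    obtain ⟨a, haj, hgapT⟩ := ConvAux.exists_gap T hTfin B μ hTcard
    have hgap : ∀ s ℓ i, a + 1 ≤ i → i ≤ a + μ →
        ((Matrix.vecMul (p s) G) ℓ).coeff i = 0 := by
      intro s ℓ i h1 h2
      by_contra hne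
      apply hgapT i h1 h2 ℓ
      refine ⟨s, ?_⟩
      show (truncp 0 j ((Matrix.vecMul (p s) G) ℓ)).coeff i ≠ 0
      rw [ConvAux.coeff_trunc0, if_pos (by omega : i ≤ j)]
      exact hne
    set d : Fin r → Fin n → Polynomial F :=
      fun s => truncv 0 a (Matrix.vecMul (p s) G) with hddef
    set p' : Fin r → Fin k → Polynomial F := fun s => Matrix.vecMul (d s) H with hp'def
    have hdeq' : ∀ s, d s = Matrix.vecMul (p' s) G := fun s =>
      ConvAux.trunc_eq_vecMul G H hGH (p s) a μ (by omega) (hgap s)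
    have hp'0 : LinearIndependent F (fun s => fun l => (p' s l).eval 0) := by
      have heq : (fun s => fun l => (p' s l).eval 0)
          = (fun s => fun l => (p s l).eval 0) := by
        funext s l
        exact ConvAux.eval0_vecMul_trunc G H hGH (p s) a l
      rw [heq]; exact hp
    have hpind : LinearIndependent (Polynomial F) p' := ConvAux.linIndep_of_eval0 p' hp'0
    have hmem : ∀ s, d s ∈ C := fun s =>
      (hdeq' s) ▸ ConvAux.vecMul_mem C G hG (p' s)
    have hrank : (r : Cardinal) ≤ Module.rank (Polynomial F)
        ↥(Submodule.span (Polynomial F) (Set.range d)) := by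
      have h := ConvAux.rank_span_ge C G hG p' hpind
      have hfeq : (fun s => Matrix.vecMul (p' s) G) = d := funext fun s => (hdeq' s).symm
      rwa [hfeq] at h
    have hsub : gsupp d ⊆ T := by
      rintro ⟨ℓ, i⟩ ⟨s, hs⟩
      have hkey : i ≤ a ∧ ((Matrix.vecMul (p s) G) ℓ).coeff i ≠ 0 := by
        by_cases hia : i ≤ a
        · refine ⟨hia, ?_⟩
          have hs' : (truncp 0 a ((Matrix.vecMul (p s) G) ℓ)).coeff i ≠ 0 := hs
          rwa [ConvAux.coeff_trunc0, if_pos hia] at hs'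
        · exfalso
          apply hs
          show (truncp 0 a ((Matrix.vecMul (p s) G) ℓ)).coeff i = 0
          rw [ConvAux.coeff_trunc0, if_neg hia]
      refine ⟨s, ?_⟩
      show (truncp 0 j ((Matrix.vecMul (p s) G) ℓ)).coeff i ≠ 0
      rw [ConvAux.coeff_trunc0, if_pos (by omega : i ≤ j)]
      exact hkey.2
    have h1 : genWt C r ≤ (gsupp d).ncard := Nat.sInf_le ⟨d, hmem, hrank, rfl⟩
    have h2 : (gsupp d).ncard ≤ T.ncard := Set.ncard_le_ncard hsub hTfin
    have h3 : gcdJ G r j ≤ gcdLim G r := ConvAux.gcdJ_le_gcdLim G hrk j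
    omega
  -- gcdLim G 1 ≤ dfree C
  have hlim_le_dfree : gcdLim G 1 ≤ dfree C := by
    have hne : { m | ∃ c : Fin n → Polynomial F, c ∈ C ∧ c ≠ 0 ∧ m = wtv c }.Nonempty := by
      have hG0mem : G ⟨0, hk⟩ ∈ C := by
        rw [← hG.2]; exact Submodule.subset_span ⟨_, rfl⟩
      exact ⟨wtv (G ⟨0, hk⟩), G ⟨0, hk⟩, hG0mem, hG.1.ne_zero ⟨0, hk⟩, rfl⟩
    refine le_csInf hne ?_
    rintro m ⟨c, hcC, hcne, rfl⟩
    obtain ⟨q, rfl⟩ := ConvAux.exists_vecMul C G hG hcC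
    have hqne : q ≠ 0 := by
      rintro rfl
      exact hcne (Matrix.zero_vecMul G)
    have hSne : {i | ∃ l, (q l).coeff i ≠ 0}.Nonempty := by
      obtain ⟨l, hl⟩ := Function.ne_iff.mp hqne
      obtain ⟨i, hi⟩ : ∃ i, (q l).coeff i ≠ 0 := by
        by_contra h'
        push_neg at h'
        exact hl (Polynomial.ext fun i => by simp [h' i])
      exact ⟨i, l, hi⟩
    set m := sInf {i | ∃ l, (q l).coeff i ≠ 0} with hmdef
    obtain ⟨l₁, hl₁⟩ := Nat.sInf_mem hSne
    have hlow : ∀ l, ∀ e < m, (q l).coeff e = 0 := by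
      intro l e he
      by_contra h'
      have hmem : e ∈ {i | ∃ l, (q l).coeff i ≠ 0} := ⟨l, h'⟩
      have := Nat.sInf_le hmem
      omega
    choose b hb using fun l => (Polynomial.X_pow_dvd_iff.mpr (hlow l))
    have hbne : (fun l => (b l).eval 0) ≠ 0 := by
      intro h0
      apply hl₁
      rw [hb l₁]
      have h5 : (X ^ m * b l₁).coeff (0 + m) = (b l₁).coeff 0 := Polynomial.coeff_X_pow_mul _ _ _
      rw [zero_add] at h5
      rw [h5, Polynomial.coeff_zero_eq_eval_zero]
      exact congrFun h0 l₁
    have hp1 : LinearIndependent F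
        (fun _ : Fin 1 => fun l => ((fun _ : Fin 1 => b) 0 l).eval 0) :=
      linearIndependent_unique_iff.mpr hbne
    have hqb : ∀ ℓ, (Matrix.vecMul q G) ℓ = X ^ m * (Matrix.vecMul b G) ℓ := by
      intro ℓ
      rw [ConvAux.vecMul_apply', ConvAux.vecMul_apply', Finset.mul_sum]
      exact Finset.sum_congr rfl fun l _ => by rw [hb l]; ring
    have hwt : wtv (Matrix.vecMul q G) = wtv (Matrix.vecMul b G) := by
      unfold wtv
      exact Finset.sum_congr rfl fun ℓ _ => by
        rw [hqb ℓ, ConvAux.support_X_pow_mul_card]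
    apply ConvAux.gcdLim_le
    intro j
    calc gcdJ G 1 j
        ≤ (gsupp fun s : Fin 1 => truncv 0 j (Matrix.vecMul ((fun _ : Fin 1 => b) s) G)).ncard :=
          ConvAux.gcdJ_le G hp1
      _ ≤ (gsupp fun _ : Fin 1 => Matrix.vecMul b G).ncard :=
          Set.ncard_le_ncard (ConvAux.gsupp_trunc_subset (fun _ : Fin 1 => Matrix.vecMul b G) j)
            (ConvAux.gsupp_finite _)
      _ = wtv (Matrix.vecMul b G) := ConvAux.ncard_gsupp_single _
      _ = wtv (Matrix.vecMul q G) := hwt.symm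
  -- dfree C ≤ genWt C 1
  have hdfree_le : dfree C ≤ genWt C 1 := by
    have hne : { m | ∃ d : Fin 1 → Fin n → Polynomial F, (∀ s, d s ∈ C) ∧
        ((1 : ℕ) : Cardinal) ≤ Module.rank (Polynomial F)
          ↥(Submodule.span (Polynomial F) (Set.range d)) ∧
        m = (gsupp d).ncard }.Nonempty := by
      refine ⟨_, fun s : Fin 1 => Matrix.vecMul (ConvAux.p0 (F := F) hk s) G,
        fun s => ConvAux.vecMul_mem C G hG _, ?_, rfl⟩
      exact ConvAux.rank_span_ge C G hG _ (ConvAux.linIndep_of_eval0 _ (ConvAux.p0_eval hk))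
    refine le_csInf hne ?_
    rintro m ⟨d, hdC, hrank, rfl⟩
    have hd0 : d 0 ≠ 0 := ConvAux.d0_ne_zero d hrank
    have hdk : d = fun _ : Fin 1 => d 0 := funext fun s => by rw [Subsingleton.elim s 0]
    refine Nat.sInf_le ⟨d 0, hdC 0, hd0, ?_⟩
    rw [hdk, ConvAux.ncard_gsupp_single]
  have e1 : genWt C 1 ≤ gcdLim G 1 := main 1 le_rfl hk
  exact ⟨main, by omega, by omega⟩
end
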